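/- Let 𝒢 be a groupoid with 𝒢₀ finite, X a finite split 𝒢-set via α=(X_g,α_g)_{g∈𝒢} such that the action α is transitive, and A a unital 𝒢-graded algebra. Let I_𝒢(X) be the groupoid of partial bijections ρ of X whose domain and image are α-invariant and which are morphisms of 𝒢-sets, acting on X by β_ρ = ρ on Y_ρ = im(ρ). Then this action of I_𝒢(X) on X is fully faithful, and there is an isomorphism of algebras (A #_α^𝒢 X) *_γ I_𝒢(X) ≅ End((A #_α^𝒢 X)_{A #_λ^𝒢 O}), where O is the set of orbits of X under I_𝒢(X) with its induced 𝒢-action λ, γ is the induced action of I_𝒢(X) on A #_α^𝒢 X, and End denotes endomorphisms of A #_α^𝒢 X as a right A #_λ^𝒢 O-module via the embedding induced by the orbit map. -/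

import Mathlib

open scoped Classical

noncomputable section

universe u v w

/-- A groupoid, presented as a set of morphisms with partially defined
composition.  `s g` is the domain (source) identity `d(g)`, `t g` the range
(target) identity `r(g)`; `mul g h` is the composite `gh`, meaningful when
`s g = t h`. -/
structure Gpd (G : Type u) where
  s : G → G
  t : G → G
  inv : G → G
  mul : G → G → G
  s_s : ∀ g, s (s g) = s g
  t_s : ∀ g, t (s g) = s g
  s_t : ∀ g, s (t g) = t g
  t_t : ∀ g, t (t g) = t g
  s_mul : ∀ g h, s g = t h → s (mul g h) = s h
  t_mul : ∀ g h, s g = t h → t (mul g h) = t g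
  mul_assoc : ∀ g h l, s g = t h → s h = t l → mul (mul g h) l = mul g (mul h l)
  mul_src : ∀ g, mul g (s g) = g
  tgt_mul : ∀ g, mul (t g) g = g
  s_inv : ∀ g, s (inv g) = t g
  t_inv : ∀ g, t (inv g) = s g
  inv_mul : ∀ g, mul (inv g) g = s g
  mul_inv : ∀ g, mul g (inv g) = t g

namespace Gpd

variable {G : Type u}

/-- `e` is an object (identity) of the groupoid. -/
def obj (𝒢 : Gpd G) (e : G) : Prop := 𝒢.s e = e

/-- The set `𝒢₀` of objects of the groupoid. -/
def Objs (𝒢 : Gpd G) : Set G := {e | 𝒢.obj e}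

end Gpd

/-- An action `α = (X_g, α_g)` of a groupoid `𝒢` on a set `X`:
`car g` is the subset `X_g` and `act g` restricts to the bijection
`α_g : X_{g⁻¹} → X_g`. -/
structure GpdSetAction {G : Type u} (𝒢 : Gpd G) (X : Type v) where
  car : G → Set X
  act : G → X → X
  car_t : ∀ g, car g = car (𝒢.t g)
  bijOn : ∀ g, Set.BijOn (act g) (car (𝒢.inv g)) (car g)
  act_id : ∀ e, 𝒢.obj e → ∀ x ∈ car e, act e x = x
  act_mul : ∀ g h, 𝒢.s g = 𝒢.t h → ∀ x ∈ car (𝒢.inv h),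
    act g (act h x) = act (𝒢.mul g h) x

/-- `X` is a split `𝒢`-set: `X` is the disjoint union of the `X_e`, `e ∈ 𝒢₀`. -/
def GpdSetAction.Split {G : Type u} {𝒢 : Gpd G} {X : Type v} (α : GpdSetAction 𝒢 X) : Prop :=
  ∀ x : X, ∃! e : G, 𝒢.obj e ∧ x ∈ α.car e

/-- The action is fully faithful: if `α_g` fixes some `x ∈ X_g ∩ X_{g⁻¹}`
then `g` is an identity. -/
def GpdSetAction.FullyFaithful {G : Type u} {𝒢 : Gpd G} {X : Type v}
    (α : GpdSetAction 𝒢 X) : Prop :=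
  ∀ g x, x ∈ α.car g ∩ α.car (𝒢.inv g) → α.act g x = x → 𝒢.obj g

/-- A `𝒢`-grading of the `k`-algebra `A`:  `A = ⊕_{g ∈ 𝒢} A_g` with
`A_g A_h ⊆ A_{gh}` for composable `g, h` and `A_g A_h = 0` otherwise. -/
structure GpdGrading {G : Type u} (𝒢 : Gpd G) (k : Type v) (A : Type w)
    [Field k] [Ring A] [Algebra k A] where
  comp : G → Submodule k A
  internal : DirectSum.IsInternal comp
  mul_mem : ∀ g h, 𝒢.s g = 𝒢.t h → ∀ a ∈ comp g, ∀ b ∈ comp h, a * b ∈ comp (𝒢.mul g h)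
  mul_eq_zero : ∀ g h, 𝒢.s g ≠ 𝒢.t h → ∀ a ∈ comp g, ∀ b ∈ comp h, a * b = 0

/-- The homogeneous component of degree `g` of `a ∈ A`. -/
noncomputable def GpdGrading.proj {G : Type u} {𝒢 : Gpd G} {k : Type v} {A : Type w}
    [Field k] [Ring A] [Algebra k A] (𝒜 : GpdGrading 𝒢 k A) (g : G) (a : A) : A :=
  ((Equiv.ofBijective _ 𝒜.internal).symm a g : A)

/-- `one : G → A` is a family of local units for the grading: each `one e`
(`e ∈ 𝒢₀`) is an identity element of `A_e` and `1_A = Σ_{e ∈ 𝒢₀} 1_e`. -/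
def IsIdFamily {G : Type u} {𝒢 : Gpd G} {k : Type v} {A : Type w}
    [Field k] [Ring A] [Algebra k A] (𝒜 : GpdGrading 𝒢 k A) (one : G → A) : Prop :=
  (∀ e, 𝒢.obj e → one e ∈ 𝒜.comp e ∧ ∀ a ∈ 𝒜.comp e, one e * a = a ∧ a * one e = a) ∧
  (1 : A) = ∑ᶠ e ∈ 𝒢.Objs, one e

/-- The multiplication of the smash product `A #_α^𝒢 X`, defined on the
ambient space of formal sums `Σ a_{(g,x)} δ_{(g,x)}`:
`(a δ_{(g,x)}) (b δ_{(h,y)}) = (a b) δ_{(gh, y)}` when `d(g) = r(h)` and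
`α_h(y) = x`, and `0` otherwise. -/
noncomputable def smashMul {G : Type u} {𝒢 : Gpd G} {X : Type v} {A : Type w} [Ring A]
    (α : GpdSetAction 𝒢 X) (f₁ f₂ : (G × X) →₀ A) : (G × X) →₀ A :=
  f₁.sum fun p a => f₂.sum fun q b =>
    if 𝒢.s p.1 = 𝒢.t q.1 ∧ α.act q.1 q.2 = p.2
    then Finsupp.single (𝒢.mul p.1 q.1, q.2) (a * b) else 0

/-- The underlying set of the smash product `A #_α^𝒢 X = ⊕_{g} ⊕_{x ∈ X_{d(g)}} A_g δ_x`: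
those formal sums whose `(g,x)`-coefficient lies in `A_g`, supported on pairs
with `x ∈ X_{d(g)}`. -/
def smashSet {G : Type u} {𝒢 : Gpd G} {X : Type v} {k : Type*} {A : Type w}
    [Field k] [Ring A] [Algebra k A]
    (α : GpdSetAction 𝒢 X) (𝒜 : GpdGrading 𝒢 k A) : Set ((G × X) →₀ A) :=
  {f | ∀ p : G × X, f p ∈ 𝒜.comp p.1 ∧ (f p ≠ 0 → p.2 ∈ α.car (𝒢.s p.1))}

/-- The identity element `Σ_{e ∈ 𝒢₀} Σ_{x ∈ X_e} 1_e δ_x` of the smash product. -/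
noncomputable def smashOne {G : Type u} {𝒢 : Gpd G} {X : Type v} {A : Type w} [Ring A]
    (α : GpdSetAction 𝒢 X) (one : G → A) : (G × X) →₀ A :=
  ∑ᶠ e ∈ 𝒢.Objs, ∑ᶠ x ∈ α.car e, Finsupp.single ((e, x) : G × X) (one e)

/-- `X` is a `(𝒢_α, 𝒦_β)`-set:  each `Y_k` is `α`-invariant, each `X_g` is
`β`-invariant, and the two actions commute. -/
structure GKCompat {G : Type u} {K : Type*} {𝒢 : Gpd G} {𝒦 : Gpd K} {X : Type v}
    (α : GpdSetAction 𝒢 X) (β : GpdSetAction 𝒦 X) : Prop where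
  alpha_inv : ∀ g κ, α.act g '' (α.car (𝒢.inv g) ∩ β.car κ) ⊆ α.car g ∩ β.car κ
  beta_inv : ∀ g κ, β.act κ '' (α.car g ∩ β.car (𝒦.inv κ)) ⊆ α.car g ∩ β.car κ
  comm : ∀ g κ x, x ∈ α.car (𝒢.inv g) ∩ β.car (𝒦.inv κ) →
    α.act g (β.act κ x) = β.act κ (α.act g x)

/-- The ideal `E_k = A #^𝒢_{θ^k} Y_k = ⊕_g ⊕_{x ∈ Y_k ∩ X_{d(g)}} A_g δ_x`
of the smash product `A #_α^𝒢 X`. -/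
def Eset {G : Type u} {K : Type*} {𝒢 : Gpd G} {𝒦 : Gpd K} {X : Type v}
    {k : Type*} {A : Type w} [Field k] [Ring A] [Algebra k A]
    (α : GpdSetAction 𝒢 X) (β : GpdSetAction 𝒦 X) (𝒜 : GpdGrading 𝒢 k A)
    (κ : K) : Set ((G × X) →₀ A) :=
  {f | f ∈ smashSet α 𝒜 ∧ ∀ p : G × X, f p ≠ 0 → p.2 ∈ β.car κ}

/-- The map `γ_k : E_{k⁻¹} → E_k`, `γ_k(a_g δ_y) = a_g δ_{β_k(y)}`. -/
noncomputable def gammaAct {G : Type u} {K : Type*} {𝒦 : Gpd K} {X : Type v} {A : Type w}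
    [Ring A] (β : GpdSetAction 𝒦 X) (κ : K) (f : (G × X) →₀ A) : (G × X) →₀ A :=
  f.sum fun p a =>
    if p.2 ∈ β.car (𝒦.inv κ) then Finsupp.single ((p.1, β.act κ p.2) : G × X) a else 0

/-- The identity element `𝟏_k = Σ_{e ∈ 𝒢₀} Σ_{x ∈ Y_k ∩ X_e} 1_e δ_x` of `E_k`. -/
noncomputable def OneE {G : Type u} {K : Type*} {𝒢 : Gpd G} {𝒦 : Gpd K} {X : Type v}
    {A : Type w} [Ring A]
    (α : GpdSetAction 𝒢 X) (β : GpdSetAction 𝒦 X) (one : G → A) (κ : K) : (G × X) →₀ A :=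
  ∑ᶠ e ∈ 𝒢.Objs, ∑ᶠ x ∈ (β.car κ ∩ α.car e), Finsupp.single ((e, x) : G × X) (one e)

/-- The `𝒦`-orbit `o(x) = {β_k(x) : k ∈ D_p}` of `x ∈ Y_p`. -/
def orbit {K : Type*} {𝒦 : Gpd K} {X : Type v} (β : GpdSetAction 𝒦 X) (x : X) : Set X :=
  {y | ∃ κ, x ∈ β.car (𝒦.inv κ) ∧ β.act κ x = y}

/-- The set `O^𝒦` of `𝒦`-orbits of `X`. -/
abbrev OrbT {K : Type*} {𝒦 : Gpd K} {X : Type v} (β : GpdSetAction 𝒦 X) : Type v :=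
  {o : Set X // ∃ x, orbit β x = o}

/-- The orbit map `φ : X → O^𝒦`, `φ(x) = o(x)`. -/
def orbMap {K : Type*} {𝒦 : Gpd K} {X : Type v} (β : GpdSetAction 𝒦 X) (x : X) : OrbT β :=
  ⟨orbit β x, ⟨x, rfl⟩⟩

/-- The monomorphism `φ* : A #_λ^𝒢 O^𝒦 → A #_α^𝒢 X` induced by the orbit map,
`φ*(a_g δ_{o(x)}) = Σ_{y ∈ X_{d(g)}, o(y) = o(x)} a_g δ_y`. -/
noncomputable def phiStar {G : Type u} {K : Type*} {𝒢 : Gpd G} {𝒦 : Gpd K} {X : Type v}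
    {A : Type w} [Ring A] (α : GpdSetAction 𝒢 X) (β : GpdSetAction 𝒦 X)
    (f : (G × OrbT β) →₀ A) : (G × X) →₀ A :=
  f.sum fun p a =>
    ∑ᶠ y ∈ {y | y ∈ α.car (𝒢.s p.1) ∧ orbit β y = (p.2 : Set X)},
      Finsupp.single ((p.1, y) : G × X) a

/-- The subalgebra of invariants `(A #_α^𝒢 X)^γ`:  all `b` in the smash
product with `γ_k(b 𝟏_{k⁻¹}) = b 𝟏_k` for every `k ∈ 𝒦`. -/
noncomputable def invariantSet {G : Type u} {K : Type*} {𝒢 : Gpd G} {𝒦 : Gpd K} {X : Type v}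
    {k : Type*} {A : Type w} [Field k] [Ring A] [Algebra k A]
    (α : GpdSetAction 𝒢 X) (β : GpdSetAction 𝒦 X) (𝒜 : GpdGrading 𝒢 k A)
    (one : G → A) : Set ((G × X) →₀ A) :=
  {f | f ∈ smashSet α 𝒜 ∧ ∀ κ : K,
    gammaAct β κ (smashMul α f (OneE α β one (𝒦.inv κ))) = smashMul α f (OneE α β one κ)}

/-- The multiplication of the skew groupoid ring `(A #_α^𝒢 X) *_γ 𝒦`,
given on formal sums `Σ_k x_k δ_k` (with `x_k ∈ E_k`) by
`(x δ_k)(y δ_l) = x γ_k(y) δ_{kl}` when `d(k) = r(l)` and `0` otherwise. -/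
noncomputable def skewMul {G : Type u} {K : Type*} {𝒢 : Gpd G} {𝒦 : Gpd K} {X : Type v}
    {A : Type w} [Ring A] (α : GpdSetAction 𝒢 X) (β : GpdSetAction 𝒦 X)
    (F₁ F₂ : K →₀ ((G × X) →₀ A)) : K →₀ ((G × X) →₀ A) :=
  F₁.sum fun κ x => F₂.sum fun l y =>
    if 𝒦.s κ = 𝒦.t l then Finsupp.single (𝒦.mul κ l) (smashMul α x (gammaAct β κ y)) else 0

/-- The underlying set of the skew groupoid ring
`(A #_α^𝒢 X) *_γ 𝒦 = ⊕_{k ∈ 𝒦} E_k δ_k`. -/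
def skewSet {G : Type u} {K : Type*} {𝒢 : Gpd G} {𝒦 : Gpd K} {X : Type v}
    {k : Type*} {A : Type w} [Field k] [Ring A] [Algebra k A]
    (α : GpdSetAction 𝒢 X) (β : GpdSetAction 𝒦 X) (𝒜 : GpdGrading 𝒢 k A) :
    Set (K →₀ ((G × X) →₀ A)) :=
  {F | ∀ κ, F κ ∈ Eset α β 𝒜 κ}

/-- `F` represents an endomorphism of `A #_α^𝒢 X` as a right
`A #_λ^𝒢 O^𝒦`-module (the right action being given through the embedding
`φ*`). -/
def IsRModEnd {G : Type u} {K : Type*} {𝒢 : Gpd G} {𝒦 : Gpd K} {X : Type v}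
    {k : Type*} {A : Type w} [Field k] [Ring A] [Algebra k A]
    (α : GpdSetAction 𝒢 X) (β : GpdSetAction 𝒦 X) (𝒜 : GpdGrading 𝒢 k A)
    (lam : GpdSetAction 𝒢 (OrbT β))
    (F : ((G × X) →₀ A) → ((G × X) →₀ A)) : Prop :=
  (∀ f ∈ smashSet α 𝒜, F f ∈ smashSet α 𝒜) ∧
  (∀ f₁ ∈ smashSet α 𝒜, ∀ f₂ ∈ smashSet α 𝒜, F (f₁ + f₂) = F f₁ + F f₂) ∧
  (∀ (c : k), ∀ f ∈ smashSet α 𝒜, F (c • f) = c • F f) ∧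
  (∀ f ∈ smashSet α 𝒜, ∀ w ∈ smashSet lam 𝒜,
    F (smashMul α f (phiStar α β w)) = smashMul α (F f) (phiStar α β w))

/-- There is an isomorphism of algebras
`(A #_α^𝒢 X) *_γ 𝒦 ≅ End((A #_α^𝒢 X)_{A #_λ^𝒢 O^𝒦})`. -/
def SmashDuality {G : Type u} {K : Type*} {𝒢 : Gpd G} {𝒦 : Gpd K} {X : Type v}
    (k : Type*) {A : Type w} [Field k] [Ring A] [Algebra k A]
    (α : GpdSetAction 𝒢 X) (β : GpdSetAction 𝒦 X) (𝒜 : GpdGrading 𝒢 k A)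
    (lam : GpdSetAction 𝒢 (OrbT β)) : Prop :=
  ∃ Ψ : (K →₀ ((G × X) →₀ A)) → ((G × X) →₀ A) → ((G × X) →₀ A),
    -- Ψ maps the skew groupoid ring into the endomorphism algebra
    (∀ F ∈ skewSet α β 𝒜, IsRModEnd α β 𝒜 lam (Ψ F)) ∧
    -- Ψ is k-linear
    (∀ F₁ ∈ skewSet α β 𝒜, ∀ F₂ ∈ skewSet α β 𝒜, ∀ f ∈ smashSet α 𝒜,
      Ψ (F₁ + F₂) f = Ψ F₁ f + Ψ F₂ f) ∧
    (∀ (c : k), ∀ F ∈ skewSet α β 𝒜, ∀ f ∈ smashSet α 𝒜, Ψ (c • F) f = c • Ψ F f) ∧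
    -- Ψ is multiplicative (composition of endomorphisms)
    (∀ F₁ ∈ skewSet α β 𝒜, ∀ F₂ ∈ skewSet α β 𝒜, ∀ f ∈ smashSet α 𝒜,
      Ψ (skewMul α β F₁ F₂) f = Ψ F₁ (Ψ F₂ f)) ∧
    -- Ψ is injective
    (∀ F₁ ∈ skewSet α β 𝒜, ∀ F₂ ∈ skewSet α β 𝒜,
      (∀ f ∈ smashSet α 𝒜, Ψ F₁ f = Ψ F₂ f) → F₁ = F₂) ∧
    -- Ψ is surjective onto the endomorphism algebra
    (∀ F : ((G × X) →₀ A) → ((G × X) →₀ A), IsRModEnd α β 𝒜 lam F →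
      ∃ Fs ∈ skewSet α β 𝒜, ∀ f ∈ smashSet α 𝒜, Ψ Fs f = F f)

/-- `ρ ⊆ X × X` is (the graph of) a partial bijection of `X`. -/
def IsPartialBij {X : Type v} (ρ : Set (X × X)) : Prop :=
  (∀ p ∈ ρ, ∀ q ∈ ρ, p.1 = q.1 → p.2 = q.2) ∧
  (∀ p ∈ ρ, ∀ q ∈ ρ, p.2 = q.2 → p.1 = q.1)

/-- A subset `Y ⊆ X` is `α`-invariant: `α_g(Y ∩ X_{g⁻¹}) ⊆ Y ∩ X_g`. -/
def AlphaInvariant {G : Type u} {𝒢 : Gpd G} {X : Type v} (α : GpdSetAction 𝒢 X)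
    (Y : Set X) : Prop :=
  ∀ g, α.act g '' (Y ∩ α.car (𝒢.inv g)) ⊆ Y ∩ α.car g

/-- `ρ` is an element of the groupoid `I_𝒢(X)`: a partial bijection of `X`
whose domain and image are `α`-invariant and which is a morphism of
`𝒢`-sets. -/
def IsIGElem {G : Type u} {𝒢 : Gpd G} {X : Type v} (α : GpdSetAction 𝒢 X)
    (ρ : Set (X × X)) : Prop :=
  IsPartialBij ρ ∧
  AlphaInvariant α (Prod.fst '' ρ) ∧
  AlphaInvariant α (Prod.snd '' ρ) ∧
  -- `ρ` preserves the pieces `X_g` of the `𝒢`-set `X`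
  (∀ p ∈ ρ, ∀ g, p.1 ∈ α.car g → p.2 ∈ α.car g) ∧
  -- `ρ` commutes with the action of `𝒢` where defined
  (∀ p ∈ ρ, ∀ g, p.1 ∈ α.car (𝒢.inv g) → (α.act g p.1, α.act g p.2) ∈ ρ)


/-! ### Auxiliary lemmas -/

section Aux

variable {G : Type u} {X : Type v}

namespace Gpd

variable (𝒢 : Gpd G)

lemma obj_s (g : G) : 𝒢.obj (𝒢.s g) := 𝒢.s_s g

lemma obj_t (g : G) : 𝒢.obj (𝒢.t g) := 𝒢.s_t g

lemma t_obj {e : G} (he : 𝒢.obj e) : 𝒢.t e = e := by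
  have := 𝒢.t_s e; rw [he] at this; exact this

lemma inv_obj {e : G} (he : 𝒢.obj e) : 𝒢.inv e = e := by
  have h1 : 𝒢.mul (𝒢.inv e) e = e := by
    have := 𝒢.inv_mul e; rwa [he] at this
  have h2 : 𝒢.mul (𝒢.inv e) e = 𝒢.inv e := by
    have hs : 𝒢.s (𝒢.inv e) = e := by rw [𝒢.s_inv, 𝒢.t_obj he]
    have := 𝒢.mul_src (𝒢.inv e); rwa [hs] at this
  rw [← h2, h1]

lemma mul_obj_right {g e : G} (h : 𝒢.s g = e) : 𝒢.mul g e = g := by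
  have := 𝒢.mul_src g; rwa [h] at this

lemma mul_obj_left {g e : G} (h : 𝒢.t g = e) : 𝒢.mul e g = g := by
  have := 𝒢.tgt_mul g; rwa [h] at this

/-- If `mul d h = d` (composable) then `h = s d`. -/
lemma eq_src_of_mul_eq {d h : G} (hc : 𝒢.s d = 𝒢.t h) (hm : 𝒢.mul d h = d) : h = 𝒢.s d :=
  calc h = 𝒢.mul (𝒢.s d) h := (𝒢.mul_obj_left hc.symm).symm
    _ = 𝒢.mul (𝒢.mul (𝒢.inv d) d) h := by rw [𝒢.inv_mul]
    _ = 𝒢.mul (𝒢.inv d) (𝒢.mul d h) := 𝒢.mul_assoc _ _ _ (𝒢.s_inv d) hc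
    _ = 𝒢.mul (𝒢.inv d) d := by rw [hm]
    _ = 𝒢.s d := 𝒢.inv_mul d

/-- If `mul h d = d` (composable) then `h = t d`. -/
lemma eq_tgt_of_mul_eq {d h : G} (hc : 𝒢.s h = 𝒢.t d) (hm : 𝒢.mul h d = d) : h = 𝒢.t d :=
  calc h = 𝒢.mul h (𝒢.s h) := (𝒢.mul_src h).symm
    _ = 𝒢.mul h (𝒢.mul d (𝒢.inv d)) := by rw [hc, 𝒢.mul_inv]
    _ = 𝒢.mul (𝒢.mul h d) (𝒢.inv d) := (𝒢.mul_assoc _ _ _ hc (𝒢.t_inv d).symm).symm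
    _ = 𝒢.mul d (𝒢.inv d) := by rw [hm]
    _ = 𝒢.t d := 𝒢.mul_inv d

end Gpd

section Grading

variable {k : Type*} {A : Type w} [Field k] [Ring A] [Algebra k A]
variable {𝒢 : Gpd G} (𝒜 : GpdGrading 𝒢 k A)

lemma GpdGrading.proj_mem (g : G) (a : A) : 𝒜.proj g a ∈ 𝒜.comp g :=
  SetLike.coe_mem _

lemma GpdGrading.proj_of_mem {g : G} {a : A} (ha : a ∈ 𝒜.comp g) :
    𝒜.proj g a = a ∧ ∀ h, h ≠ g → 𝒜.proj h a = 0 := by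
  have hsymm : (Equiv.ofBijective _ 𝒜.internal).symm a
      = DirectSum.of (fun i => (𝒜.comp i : Submodule k A)) g ⟨a, ha⟩ := by
    apply (Equiv.ofBijective _ 𝒜.internal).injective
    rw [Equiv.apply_symm_apply]
    exact (DirectSum.coeAddMonoidHom_of 𝒜.comp g ⟨a, ha⟩).symm
  constructor
  · show ((((Equiv.ofBijective _ 𝒜.internal).symm a) g : 𝒜.comp g) : A) = a
    rw [hsymm, DirectSum.of_eq_same]
  · intro h hh
    show ((((Equiv.ofBijective _ 𝒜.internal).symm a) h : 𝒜.comp h) : A) = 0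
    rw [hsymm, DirectSum.of_eq_of_ne _ _ _ hh]
    rfl

lemma GpdGrading.proj_eq_self {g : G} {a : A} (ha : a ∈ 𝒜.comp g) : 𝒜.proj g a = a :=
  (𝒜.proj_of_mem ha).1

lemma GpdGrading.proj_eq_zero {g h : G} {a : A} (ha : a ∈ 𝒜.comp g) (hh : h ≠ g) :
    𝒜.proj h a = 0 :=
  (𝒜.proj_of_mem ha).2 h hh

lemma GpdGrading.proj_zero (g : G) : 𝒜.proj g (0 : A) = 0 :=
  (𝒜.proj_of_mem (Submodule.zero_mem (𝒜.comp g))).1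

lemma GpdGrading.proj_add (g : G) (a b : A) :
    𝒜.proj g (a + b) = 𝒜.proj g a + 𝒜.proj g b := by
  have hsymm : (Equiv.ofBijective _ 𝒜.internal).symm (a + b)
      = (Equiv.ofBijective _ 𝒜.internal).symm a + (Equiv.ofBijective _ 𝒜.internal).symm b := by
    apply (Equiv.ofBijective _ 𝒜.internal).injective
    rw [Equiv.apply_symm_apply]
    show a + b = DirectSum.coeAddMonoidHom 𝒜.comp (_ + _)
    have ha' : DirectSum.coeAddMonoidHom 𝒜.comp ((Equiv.ofBijective _ 𝒜.internal).symm a) = a :=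
      Equiv.apply_symm_apply (Equiv.ofBijective _ 𝒜.internal) a
    have hb' : DirectSum.coeAddMonoidHom 𝒜.comp ((Equiv.ofBijective _ 𝒜.internal).symm b) = b :=
      Equiv.apply_symm_apply (Equiv.ofBijective _ 𝒜.internal) b
    rw [map_add, ha', hb']
  show ((((Equiv.ofBijective _ 𝒜.internal).symm (a+b)) g : 𝒜.comp g) : A) = _
  rw [hsymm]
  rfl

lemma GpdGrading.proj_finset_sum {ι : Type*} (s : Finset ι) (f : ι → A) (g : G) :
    𝒜.proj g (∑ i ∈ s, f i) = ∑ i ∈ s, 𝒜.proj g (f i) := by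
  classical
  induction s using Finset.induction_on with
  | empty => rw [Finset.sum_empty, Finset.sum_empty, 𝒜.proj_zero]
  | insert _ _ hns ih =>
      rw [Finset.sum_insert hns, Finset.sum_insert hns, 𝒜.proj_add, ih]

/-- Decomposition of an element into finitely many homogeneous components. -/
lemma GpdGrading.exists_decomp (a : A) :
    ∃ s : Finset G, (∀ g ∉ s, 𝒜.proj g a = 0) ∧ ∑ g ∈ s, 𝒜.proj g a = a := by
  classical
  set d := (Equiv.ofBijective _ 𝒜.internal).symm a with hd
  refine ⟨DFinsupp.support d, ?_, ?_⟩
  · intro g hg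
    show ((d g : 𝒜.comp g) : A) = 0
    rw [DFinsupp.notMem_support_iff.mp hg]; rfl
  · have h1 : DirectSum.coeAddMonoidHom 𝒜.comp d = a := by
      show (Equiv.ofBijective _ 𝒜.internal) d = a
      rw [hd, Equiv.apply_symm_apply]
    calc ∑ g ∈ DFinsupp.support d, 𝒜.proj g a
        = DFinsupp.sum d (fun _ x => (x : A)) := rfl
      _ = a := by rw [← DirectSum.coeAddMonoidHom_eq_dfinsuppSum, h1]

/-- Right local unit: `a * 1_{s d} = a` for `a ∈ A_d`. -/
lemma GpdGrading.mul_proj_one {d : G} {a : A} (ha : a ∈ 𝒜.comp d) :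
    a * 𝒜.proj (𝒢.s d) 1 = a := by
  classical
  obtain ⟨s, hs0, hs⟩ := 𝒜.exists_decomp (1 : A)
  have key : ∀ h ∈ s, h ≠ 𝒢.s d → 𝒜.proj d (a * 𝒜.proj h 1) = 0 := by
    intro h _ hh
    by_cases hc : 𝒢.s d = 𝒢.t h
    · refine 𝒜.proj_eq_zero (𝒜.mul_mem d h hc a ha _ (𝒜.proj_mem h 1)) ?_
      intro hco
      exact hh (𝒢.eq_src_of_mul_eq hc hco.symm)
    · rw [𝒜.mul_eq_zero d h hc a ha _ (𝒜.proj_mem h 1), 𝒜.proj_zero]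
  have hstep : a = ∑ h ∈ s, 𝒜.proj d (a * 𝒜.proj h 1) := by
    conv_lhs => rw [← 𝒜.proj_eq_self ha, ← mul_one a, ← hs]
    rw [Finset.mul_sum, 𝒜.proj_finset_sum]
  have hc2 : 𝒢.s d = 𝒢.t (𝒢.s d) := (𝒢.t_s d).symm
  have hmem2 : a * 𝒜.proj (𝒢.s d) 1 ∈ 𝒜.comp d := by
    have := 𝒜.mul_mem d (𝒢.s d) hc2 a ha _ (𝒜.proj_mem _ 1)
    rwa [𝒢.mul_src] at this
  have hsingle : ∑ h ∈ s, 𝒜.proj d (a * 𝒜.proj h 1) = 𝒜.proj d (a * 𝒜.proj (𝒢.s d) 1) :=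
    Finset.sum_eq_single _ key
      (fun hnot => by rw [hs0 _ hnot, mul_zero, 𝒜.proj_zero])
  exact (hstep.trans (hsingle.trans (𝒜.proj_eq_self hmem2))).symm

/-- Left local unit: `1_{t d} * a = a` for `a ∈ A_d`. -/
lemma GpdGrading.proj_one_mul {d : G} {a : A} (ha : a ∈ 𝒜.comp d) :
    𝒜.proj (𝒢.t d) 1 * a = a := by
  classical
  obtain ⟨s, hs0, hs⟩ := 𝒜.exists_decomp (1 : A)
  have key : ∀ h ∈ s, h ≠ 𝒢.t d → 𝒜.proj d (𝒜.proj h 1 * a) = 0 := by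
    intro h _ hh
    by_cases hc : 𝒢.s h = 𝒢.t d
    · refine 𝒜.proj_eq_zero (𝒜.mul_mem h d hc _ (𝒜.proj_mem h 1) a ha) ?_
      intro hco
      exact hh (𝒢.eq_tgt_of_mul_eq hc hco.symm)
    · rw [𝒜.mul_eq_zero h d hc _ (𝒜.proj_mem h 1) a ha, 𝒜.proj_zero]
  have hstep : a = ∑ h ∈ s, 𝒜.proj d (𝒜.proj h 1 * a) := by
    conv_lhs => rw [← 𝒜.proj_eq_self ha, ← one_mul a, ← hs]
    rw [Finset.sum_mul, 𝒜.proj_finset_sum]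
  have hc2 : 𝒢.s (𝒢.t d) = 𝒢.t d := 𝒢.s_t d
  have hmem2 : 𝒜.proj (𝒢.t d) 1 * a ∈ 𝒜.comp d := by
    have := 𝒜.mul_mem (𝒢.t d) d hc2 _ (𝒜.proj_mem _ 1) a ha
    rwa [𝒢.tgt_mul] at this
  have hsingle : ∑ h ∈ s, 𝒜.proj d (𝒜.proj h 1 * a) = 𝒜.proj d (𝒜.proj (𝒢.t d) 1 * a) :=
    Finset.sum_eq_single _ key
      (fun hnot => by rw [hs0 _ hnot, zero_mul, 𝒜.proj_zero])
  exact (hstep.trans (hsingle.trans (𝒜.proj_eq_self hmem2))).symm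

end Grading


section Calc

variable {k : Type*} {A : Type w} [Field k] [Ring A] [Algebra k A]
variable {K' : Type*} {𝒢 : Gpd G} {𝒦 : Gpd K'}
variable {α : GpdSetAction 𝒢 X} {β : GpdSetAction 𝒦 X}
variable {𝒜 : GpdGrading 𝒢 k A}

/-! #### smashMul calculus -/

lemma smashMul_zero_left (f : (G × X) →₀ A) : smashMul α 0 f = 0 :=
  Finsupp.sum_zero_index

lemma smashMul_zero_right (f : (G × X) →₀ A) : smashMul α f 0 = 0 := by
  simp only [smashMul, Finsupp.sum_zero_index, Finsupp.sum, Finsupp.support_zero,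
    Finset.sum_empty, Finset.sum_const_zero]

lemma smashMul_single_single (p q : G × X) (a b : A) :
    smashMul α (Finsupp.single p a) (Finsupp.single q b)
      = if 𝒢.s p.1 = 𝒢.t q.1 ∧ α.act q.1 q.2 = p.2
        then Finsupp.single ((𝒢.mul p.1 q.1, q.2) : G × X) (a * b) else 0 := by
  unfold smashMul
  rw [Finsupp.sum_single_index (by simp), Finsupp.sum_single_index (by simp)]

lemma smashMul_single_single' (g h : G) (x y : X) (a b : A) :
    smashMul α (Finsupp.single ((g, x) : G × X) a) (Finsupp.single ((h, y) : G × X) b)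
      = if 𝒢.s g = 𝒢.t h ∧ α.act h y = x
        then Finsupp.single ((𝒢.mul g h, y) : G × X) (a * b) else 0 :=
  smashMul_single_single ((g, x) : G × X) ((h, y) : G × X) a b

lemma smashMul_add_left (f₁ f₂ g : (G × X) →₀ A) :
    smashMul α (f₁ + f₂) g = smashMul α f₁ g + smashMul α f₂ g := by
  unfold smashMul
  refine Finsupp.sum_add_index' (fun p => by simp) (fun p b₁ b₂ => ?_)
  rw [← Finsupp.sum_add]
  exact Finsupp.sum_congr fun q hq => by
    split_ifs with h
    · rw [add_mul, Finsupp.single_add]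
    · rw [add_zero]

lemma smashMul_add_right (f g₁ g₂ : (G × X) →₀ A) :
    smashMul α f (g₁ + g₂) = smashMul α f g₁ + smashMul α f g₂ := by
  unfold smashMul
  rw [← Finsupp.sum_add]
  exact Finsupp.sum_congr fun p hp =>
    Finsupp.sum_add_index' (fun q => by simp) (fun q b₁ b₂ => by
      split_ifs with h
      · rw [mul_add, Finsupp.single_add]
      · rw [add_zero])

lemma smashMul_smul_left (c : k) (f g : (G × X) →₀ A) :
    smashMul α (c • f) g = c • smashMul α f g := by
  unfold smashMul
  rw [Finsupp.sum_smul_index' (fun p => by simp), Finsupp.smul_sum]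
  refine Finsupp.sum_congr fun p hp => ?_
  rw [Finsupp.smul_sum]
  refine Finsupp.sum_congr fun q hq => ?_
  split_ifs with h
  · rw [smul_mul_assoc, Finsupp.smul_single]
  · rw [smul_zero]

lemma smashMul_smul_right (c : k) (f g : (G × X) →₀ A) :
    smashMul α f (c • g) = c • smashMul α f g := by
  unfold smashMul
  rw [Finsupp.smul_sum]
  refine Finsupp.sum_congr fun p hp => ?_
  rw [Finsupp.sum_smul_index' (fun q => by simp), Finsupp.smul_sum]
  refine Finsupp.sum_congr fun q hq => ?_
  split_ifs with h
  · rw [mul_smul_comm, Finsupp.smul_single]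
  · rw [smul_zero]

lemma smashMul_sum_left {ι : Type*} (s : Finset ι) (t : ι → (G × X) →₀ A) (g : (G × X) →₀ A) :
    smashMul α (∑ i ∈ s, t i) g = ∑ i ∈ s, smashMul α (t i) g := by
  classical
  induction s using Finset.induction_on with
  | empty => rw [Finset.sum_empty, Finset.sum_empty]; exact smashMul_zero_left g
  | insert _ _ hns ih =>
      rw [Finset.sum_insert hns, Finset.sum_insert hns, smashMul_add_left, ih]

lemma smashMul_sum_right {ι : Type*} (s : Finset ι) (f : (G × X) →₀ A) (t : ι → (G × X) →₀ A) :
    smashMul α f (∑ i ∈ s, t i) = ∑ i ∈ s, smashMul α f (t i) := by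
  classical
  induction s using Finset.induction_on with
  | empty => rw [Finset.sum_empty, Finset.sum_empty]; exact smashMul_zero_right f
  | insert _ _ hns ih =>
      rw [Finset.sum_insert hns, Finset.sum_insert hns, smashMul_add_right, ih]

/-! #### gammaAct calculus -/

lemma gammaAct_zero (κ : K') : gammaAct β κ (0 : (G × X) →₀ A) = 0 :=
  Finsupp.sum_zero_index

lemma gammaAct_single (κ : K') (p : G × X) (a : A) :
    gammaAct β κ (Finsupp.single p a)
      = if p.2 ∈ β.car (𝒦.inv κ) then Finsupp.single ((p.1, β.act κ p.2) : G × X) a else 0 := by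
  unfold gammaAct
  rw [Finsupp.sum_single_index (by simp)]

lemma gammaAct_single' (κ : K') (g : G) (x : X) (a : A) :
    gammaAct β κ (Finsupp.single ((g, x) : G × X) a)
      = if x ∈ β.car (𝒦.inv κ) then Finsupp.single ((g, β.act κ x) : G × X) a else 0 :=
  gammaAct_single κ ((g, x) : G × X) a

lemma gammaAct_add (κ : K') (f g : (G × X) →₀ A) :
    gammaAct β κ (f + g) = gammaAct β κ f + gammaAct β κ g := by
  unfold gammaAct
  exact Finsupp.sum_add_index' (fun p => by simp) (fun p b₁ b₂ => by
    split_ifs with h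
    · rw [Finsupp.single_add]
    · rw [add_zero])

lemma gammaAct_smul (c : k) (κ : K') (f : (G × X) →₀ A) :
    gammaAct β κ (c • f) = c • gammaAct β κ f := by
  unfold gammaAct
  rw [Finsupp.sum_smul_index' (fun p => by simp), Finsupp.smul_sum]
  refine Finsupp.sum_congr fun p hp => ?_
  split_ifs with h
  · rw [Finsupp.smul_single]
  · rw [smul_zero]

lemma gammaAct_sum {ι : Type*} (κ : K') (s : Finset ι) (t : ι → (G × X) →₀ A) :
    gammaAct β κ (∑ i ∈ s, t i) = ∑ i ∈ s, gammaAct β κ (t i) := by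
  classical
  induction s using Finset.induction_on with
  | empty => rw [Finset.sum_empty, Finset.sum_empty]; exact gammaAct_zero κ
  | insert _ _ hns ih =>
      rw [Finset.sum_insert hns, Finset.sum_insert hns, gammaAct_add, ih]

/-! #### phiStar calculus -/

/-- The finite set of points of `X` lying in `X_{d(g)}` with orbit `o`. -/
noncomputable def colFinset [Finite X] (α : GpdSetAction 𝒢 X) (β : GpdSetAction 𝒦 X)
    (p : G × OrbT β) : Finset X :=
  (Set.toFinite {y | y ∈ α.car (𝒢.s p.1) ∧ orbit β y = (p.2 : Set X)}).toFinset

lemma mem_colFinset [Finite X] (p : G × OrbT β) (y : X) :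
    y ∈ colFinset α β p ↔ y ∈ α.car (𝒢.s p.1) ∧ orbit β y = (p.2 : Set X) := by
  unfold colFinset
  rw [Set.Finite.mem_toFinset]
  rfl

lemma phiStar_eq [Finite X] (f : (G × OrbT β) →₀ A) :
    phiStar α β f = f.sum fun p a => ∑ y ∈ colFinset α β p, Finsupp.single ((p.1, y) : G × X) a := by
  unfold phiStar
  refine Finsupp.sum_congr fun p _ => ?_
  have hset : {y | y ∈ α.car (𝒢.s p.1) ∧ orbit β y = (p.2 : Set X)} = ↑(colFinset α β p) :=
    (Set.Finite.coe_toFinset _).symm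
  rw [hset, finsum_mem_coe_finset]

lemma phiStar_single [Finite X] (p : G × OrbT β) (b : A) :
    phiStar α β (Finsupp.single p b)
      = ∑ y ∈ colFinset α β p, Finsupp.single ((p.1, y) : G × X) b := by
  rw [phiStar_eq, Finsupp.sum_single_index (by simp)]

lemma phiStar_add [Finite X] (f g : (G × OrbT β) →₀ A) :
    phiStar α β (f + g) = phiStar α β f + phiStar α β g := by
  rw [phiStar_eq, phiStar_eq, phiStar_eq]
  refine Finsupp.sum_add_index' (fun p => by simp) (fun p b₁ b₂ => ?_)
  rw [← Finset.sum_add_distrib]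
  exact Finset.sum_congr rfl fun y _ => by rw [Finsupp.single_add]

/-! #### smashSet closure -/

lemma smashSet_zero : (0 : (G × X) →₀ A) ∈ smashSet α 𝒜 := by
  intro p
  refine ⟨by simp, fun h => absurd rfl h⟩

lemma smashSet_add {f g : (G × X) →₀ A} (hf : f ∈ smashSet α 𝒜) (hg : g ∈ smashSet α 𝒜) :
    f + g ∈ smashSet α 𝒜 := by
  intro p
  rw [Finsupp.add_apply]
  refine ⟨Submodule.add_mem _ (hf p).1 (hg p).1, fun hne => ?_⟩
  by_cases h1 : f p = 0
  · by_cases h2 : g p = 0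
    · exact absurd (by rw [h1, h2, add_zero]) hne
    · exact (hg p).2 h2
  · exact (hf p).2 h1

lemma smashSet_smul (c : k) {f : (G × X) →₀ A} (hf : f ∈ smashSet α 𝒜) :
    c • f ∈ smashSet α 𝒜 := by
  intro p
  rw [Finsupp.smul_apply]
  refine ⟨Submodule.smul_mem _ c (hf p).1, fun hne => ?_⟩
  refine (hf p).2 (fun h0 => hne ?_)
  rw [h0, smul_zero]

lemma smashSet_single {p : G × X} {a : A} (ha : a ∈ 𝒜.comp p.1)
    (hx : a ≠ 0 → p.2 ∈ α.car (𝒢.s p.1)) :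
    Finsupp.single p a ∈ smashSet α 𝒜 := by
  intro q
  rw [Finsupp.single_apply]
  split_ifs with h
  · cases h
    exact ⟨ha, hx⟩
  · exact ⟨Submodule.zero_mem _, fun h0 => absurd rfl h0⟩

lemma smashSet_finset_sum {ι : Type*} (s : Finset ι) (t : ι → (G × X) →₀ A)
    (ht : ∀ i ∈ s, t i ∈ smashSet α 𝒜) : (∑ i ∈ s, t i) ∈ smashSet α 𝒜 := by
  classical
  induction s using Finset.induction_on with
  | empty => rw [Finset.sum_empty]; exact smashSet_zero
  | @insert j s hns ih =>
      rw [Finset.sum_insert hns]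
      exact smashSet_add (ht j (Finset.mem_insert_self j s))
        (ih fun i hi => ht i (Finset.mem_insert_of_mem hi))

lemma smashSet_finsupp_sum {ι : Type*} {M : Type*} [Zero M] (f : ι →₀ M)
    (h : ι → M → (G × X) →₀ A)
    (H : ∀ i ∈ f.support, h i (f i) ∈ smashSet α 𝒜) : f.sum h ∈ smashSet α 𝒜 :=
  smashSet_finset_sum _ _ H

lemma smashSet_mul {f g : (G × X) →₀ A} (hf : f ∈ smashSet α 𝒜) (hg : g ∈ smashSet α 𝒜) :
    smashMul α f g ∈ smashSet α 𝒜 := by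
  refine smashSet_finsupp_sum _ _ fun p hp => ?_
  refine smashSet_finsupp_sum _ _ fun q hq => ?_
  split_ifs with hcond
  · refine smashSet_single (𝒜.mul_mem _ _ hcond.1 _ (hf p).1 _ (hg q).1) (fun hne => ?_)
    have hq2 : g q ≠ 0 := fun h0 => hne (by rw [h0, mul_zero])
    show q.2 ∈ α.car (𝒢.s (𝒢.mul p.1 q.1))
    rw [𝒢.s_mul _ _ hcond.1]
    exact (hg q).2 hq2
  · exact smashSet_zero

/-- Induction over elements of the smash product. -/
lemma smashSet_induction {P : ((G × X) →₀ A) → Prop} (h0 : P 0)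
    (hadd : ∀ f g, f ∈ smashSet α 𝒜 → g ∈ smashSet α 𝒜 → P f → P g → P (f + g))
    (hsingle : ∀ p : G × X, ∀ a : A, a ∈ 𝒜.comp p.1 → p.2 ∈ α.car (𝒢.s p.1) →
      P (Finsupp.single p a)) :
    ∀ f, f ∈ smashSet α 𝒜 → P f := by
  classical
  intro f hf
  generalize hn : f.support.card = n
  induction n generalizing f with
  | zero =>
      have : f = 0 := Finsupp.card_support_eq_zero.mp hn
      rwa [this]
  | succ n ih =>
      obtain ⟨p, hp⟩ : f.support.Nonempty := Finset.card_pos.mp (by rw [hn]; exact n.succ_pos)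
      have hfp : f p ≠ 0 := Finsupp.mem_support_iff.mp hp
      have hErase : Finsupp.erase p f ∈ smashSet α 𝒜 := by
        intro q
        rw [Finsupp.erase_apply]
        split_ifs with h
        · exact ⟨Submodule.zero_mem _, fun h0 => absurd rfl h0⟩
        · exact hf q
      have hsing_mem : Finsupp.single p (f p) ∈ smashSet α 𝒜 :=
        smashSet_single (hf p).1 (fun _ => (hf p).2 hfp)
      have hP1 : P (Finsupp.single p (f p)) := hsingle p (f p) (hf p).1 ((hf p).2 hfp)
      have hcard : (Finsupp.erase p f).support.card = n := by
        rw [Finsupp.support_erase, Finset.card_erase_of_mem hp, hn]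
        rfl
      have hP2 : P (Finsupp.erase p f) := ih _ hErase hcard
      have := hadd _ _ hsing_mem hErase hP1 hP2
      rwa [Finsupp.single_add_erase] at this

end Calc

section ActLemmas

variable {𝒢 : Gpd G} (α : GpdSetAction 𝒢 X)

lemma GpdSetAction.car_inv (g : G) : α.car (𝒢.inv g) = α.car (𝒢.s g) := by
  rw [α.car_t (𝒢.inv g), 𝒢.t_inv]

lemma GpdSetAction.car_inv_inv (h : G) : α.car (𝒢.inv (𝒢.inv h)) = α.car (𝒢.t h) := by
  rw [α.car_inv, 𝒢.s_inv]

lemma GpdSetAction.mapsTo (g : G) {x : X} (hx : x ∈ α.car (𝒢.s g)) :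
    α.act g x ∈ α.car (𝒢.t g) := by
  have h1 := (α.bijOn g).mapsTo
  rw [α.car_inv] at h1
  have h2 := h1 hx
  rwa [α.car_t g] at h2

lemma GpdSetAction.inv_mapsTo (h : G) {x : X} (hx : x ∈ α.car (𝒢.t h)) :
    α.act (𝒢.inv h) x ∈ α.car (𝒢.s h) := by
  have hx' : x ∈ α.car (𝒢.s (𝒢.inv h)) := by rwa [𝒢.s_inv]
  have h1 := α.mapsTo (𝒢.inv h) hx'
  rwa [𝒢.t_inv] at h1

lemma GpdSetAction.act_inv_act (g : G) {x : X} (hx : x ∈ α.car (𝒢.s g)) :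
    α.act (𝒢.inv g) (α.act g x) = x := by
  rw [α.act_mul (𝒢.inv g) g (𝒢.s_inv g) x (by rwa [α.car_inv]), 𝒢.inv_mul]
  exact α.act_id _ (𝒢.obj_s g) x hx

lemma GpdSetAction.act_act_inv (g : G) {y : X} (hy : y ∈ α.car (𝒢.t g)) :
    α.act g (α.act (𝒢.inv g) y) = y := by
  have hy' : y ∈ α.car (𝒢.inv (𝒢.inv g)) := by rwa [α.car_inv_inv]
  rw [α.act_mul g (𝒢.inv g) (𝒢.t_inv g).symm y hy', 𝒢.mul_inv]
  exact α.act_id _ (𝒢.obj_t g) y hy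

lemma GpdSetAction.act_injOn (g : G) {x y : X} (hx : x ∈ α.car (𝒢.s g))
    (hy : y ∈ α.car (𝒢.s g)) (h : α.act g x = α.act g y) : x = y := by
  rw [← α.act_inv_act g hx, h, α.act_inv_act g hy]

end ActLemmas

section KeyLemmas

variable {k : Type*} {A : Type w} [Field k] [Ring A] [Algebra k A]
variable {K' : Type*} {𝒢 : Gpd G} {𝒦 : Gpd K'}
variable {α : GpdSetAction 𝒢 X} {β : GpdSetAction 𝒦 X}
variable {𝒜 : GpdGrading 𝒢 k A}

/-- Formula for right multiplication by `φ*` of a single. -/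
lemma single_mul_phiStar [Finite X] {g : G} {x : X} (hx : x ∈ α.car (𝒢.s g)) (a : A)
    (h : G) (o : OrbT β) (b : A) :
    smashMul α (Finsupp.single ((g, x) : G × X) a) (phiStar α β (Finsupp.single ((h, o) : G × OrbT β) b))
      = if 𝒢.s g = 𝒢.t h ∧ orbit β (α.act (𝒢.inv h) x) = (o : Set X)
        then Finsupp.single ((𝒢.mul g h, α.act (𝒢.inv h) x) : G × X) (a * b) else 0 := by
  rw [phiStar_single, smashMul_sum_right]
  by_cases hc : 𝒢.s g = 𝒢.t h
  · set y₀ := α.act (𝒢.inv h) x with hy₀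
    have hxth : x ∈ α.car (𝒢.t h) := hc ▸ hx
    have hy₀mem : y₀ ∈ α.car (𝒢.s h) := α.inv_mapsTo h hxth
    have hact : α.act h y₀ = x := α.act_act_inv h hxth
    by_cases ho : orbit β y₀ = (o : Set X)
    · rw [if_pos ⟨hc, ho⟩, Finset.sum_eq_single y₀]
      · rw [smashMul_single_single, if_pos ⟨hc, hact⟩]
      · intro y hy hne
        rw [smashMul_single_single]
        refine if_neg (fun hh => hne ?_)
        have hymem : y ∈ α.car (𝒢.s h) := ((mem_colFinset _ _).mp hy).1
        have hh2 : α.act h y = x := hh.2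
        exact α.act_injOn h hymem hy₀mem (hh2.trans hact.symm)
      · intro hnot
        exact absurd ((mem_colFinset ((h, o) : G × OrbT β) y₀).mpr ⟨hy₀mem, ho⟩) hnot
    · rw [if_neg (fun hh => ho hh.2)]
      refine Finset.sum_eq_zero fun y hy => ?_
      rw [smashMul_single_single]
      refine if_neg (fun hh => ?_)
      have hymem := (mem_colFinset ((h, o) : G × OrbT β) y).mp hy
      have hh2 : α.act h y = x := hh.2
      have hymem1 : y ∈ α.car (𝒢.s h) := hymem.1
      have hyy : y = y₀ := by rw [hy₀, ← hh2, α.act_inv_act h hymem1]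
      exact ho (hyy ▸ hymem.2)
  · rw [if_neg (fun hh => hc hh.1)]
    refine Finset.sum_eq_zero fun y hy => ?_
    rw [smashMul_single_single]
    exact if_neg (fun hh => hc hh.1)

/-- The column projection of a formal sum. -/
noncomputable def colProj (z : X) (m : (G × X) →₀ A) : (G × X) →₀ A :=
  m.sum fun p c => if p.2 = z then Finsupp.single p c else 0

lemma colProj_mem {m : (G × X) →₀ A} (hm : m ∈ smashSet α 𝒜) (z : X) :
    colProj z m ∈ smashSet α 𝒜 := by
  refine smashSet_finsupp_sum _ _ fun p hp => ?_
  split_ifs with h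
  · exact smashSet_single (hm p).1 (hm p).2
  · exact smashSet_zero

lemma smashMul_colProj_single (z : X) (m : (G × X) →₀ A) (q : G × X) (b : A) :
    smashMul α (colProj z m) (Finsupp.single q b)
      = if α.act q.1 q.2 = z then smashMul α m (Finsupp.single q b) else 0 := by
  have hrepr : colProj z m = ∑ p ∈ m.support, (if p.2 = z then Finsupp.single p (m p) else 0) := rfl
  rw [hrepr, smashMul_sum_left]
  by_cases hz : α.act q.1 q.2 = z
  · rw [if_pos hz]
    conv_rhs => rw [← Finsupp.sum_single m]
    rw [show (m.sum Finsupp.single) = ∑ p ∈ m.support, Finsupp.single p (m p) from rfl,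
      smashMul_sum_left]
    refine Finset.sum_congr rfl fun p hp => ?_
    rw [apply_ite (fun u => smashMul α u (Finsupp.single q b)), smashMul_zero_left]
    split_ifs with h1
    · rfl
    · rw [smashMul_single_single]
      refine (if_neg (fun hh => h1 ?_)).symm
      rw [← hh.2, hz]
  · rw [if_neg hz]
    refine Finset.sum_eq_zero fun p hp => ?_
    rw [apply_ite (fun u => smashMul α u (Finsupp.single q b)), smashMul_zero_left,
      smashMul_single_single]
    split_ifs with h1 h2
    · exact absurd (h2.2.trans h1) hz
    · rfl
    · rfl

/-- Coefficient formula for right multiplication by a single of object degree. -/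
lemma smashMul_single_obj_apply {e : G} (he : 𝒢.obj e) {y' : X} (hy' : y' ∈ α.car e)
    (m : (G × X) →₀ A) (b : A) (g : G) (z : X) :
    (smashMul α m (Finsupp.single ((e, y') : G × X) b)) (g, z)
      = if 𝒢.s g = e ∧ z = y' then m (g, z) * b else 0 := by
  have hte : 𝒢.t e = e := 𝒢.t_obj he
  have hacte : α.act e y' = y' := α.act_id e he y' hy'
  unfold smashMul
  rw [Finsupp.sum_apply]
  have hterm : ∀ p : G × X, ∀ a : A, ((Finsupp.single ((e, y') : G × X) b).sum fun q b' =>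
        if 𝒢.s p.1 = 𝒢.t q.1 ∧ α.act q.1 q.2 = p.2
        then Finsupp.single ((𝒢.mul p.1 q.1, q.2) : G × X) (a * b') else 0)
      = if 𝒢.s p.1 = e ∧ p.2 = y'
        then Finsupp.single ((𝒢.mul p.1 e, y') : G × X) (a * b) else 0 := by
    intro p a
    rw [Finsupp.sum_single_index (by simp)]
    by_cases h1 : 𝒢.s p.1 = e ∧ p.2 = y'
    · rw [if_pos h1, if_pos ⟨by rw [hte]; exact h1.1, by rw [hacte]; exact h1.2.symm⟩]
    · rw [if_neg h1, if_neg (fun hh => h1 ⟨hte ▸ hh.1, (hh.2.symm.trans hacte)⟩)]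
  have hcong : (m.sum fun p a => ((Finsupp.single ((e, y') : G × X) b).sum fun q b' =>
        if 𝒢.s p.1 = 𝒢.t q.1 ∧ α.act q.1 q.2 = p.2
        then Finsupp.single ((𝒢.mul p.1 q.1, q.2) : G × X) (a * b') else 0) (g, z))
      = m.sum fun p a => (if 𝒢.s p.1 = e ∧ p.2 = y'
        then Finsupp.single ((𝒢.mul p.1 e, y') : G × X) (a * b) else 0) (g, z) :=
    Finsupp.sum_congr fun p hp => by rw [hterm p (m p)]
  rw [hcong]
  by_cases htarget : 𝒢.s g = e ∧ z = y'
  · rw [if_pos htarget]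
    have hmul : 𝒢.mul g e = g := 𝒢.mul_obj_right htarget.1
    rw [show (m.sum fun p a => (if 𝒢.s p.1 = e ∧ p.2 = y'
        then Finsupp.single ((𝒢.mul p.1 e, y') : G × X) (a * b) else 0) (g, z))
      = ∑ p ∈ m.support, (if 𝒢.s p.1 = e ∧ p.2 = y'
        then Finsupp.single ((𝒢.mul p.1 e, y') : G × X) ((m p) * b) else 0) (g, z) from rfl]
    rw [Finset.sum_eq_single ((g, y') : G × X)]
    · rw [if_pos ⟨htarget.1, rfl⟩]
      have : ((𝒢.mul g e, y') : G × X) = (g, z) := by rw [hmul, htarget.2]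
      rw [Finsupp.single_apply, if_pos this, htarget.2]
    · intro p hp hne
      split_ifs with hcond
      · rw [Finsupp.single_apply]
        refine if_neg (fun habs => hne ?_)
        have hp1 : p.1 = g := by
          have := congrArg Prod.fst habs
          rwa [𝒢.mul_obj_right hcond.1] at this
        have hp2 : p.2 = y' := hcond.2
        exact Prod.ext hp1 hp2
      · rfl
    · intro hnot
      rw [Finsupp.notMem_support_iff.mp hnot, htarget.2]
      split_ifs with hcond
      · simp
      · rfl
  · rw [if_neg htarget]
    rw [show (m.sum fun p a => (if 𝒢.s p.1 = e ∧ p.2 = y'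
        then Finsupp.single ((𝒢.mul p.1 e, y') : G × X) (a * b) else 0) (g, z))
      = ∑ p ∈ m.support, (if 𝒢.s p.1 = e ∧ p.2 = y'
        then Finsupp.single ((𝒢.mul p.1 e, y') : G × X) ((m p) * b) else 0) (g, z) from rfl]
    refine Finset.sum_eq_zero fun p hp => ?_
    rw [apply_ite (fun u : (G × X) →₀ A => u (g, z))]
    split_ifs with hcond
    · rw [Finsupp.single_apply]
      refine if_neg (fun habs => htarget ?_)
      have hp1 : 𝒢.mul p.1 e = g := congrArg Prod.fst habs
      have hp2 : y' = z := congrArg Prod.snd habs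
      refine ⟨?_, hp2.symm⟩
      rw [← hp1, 𝒢.s_mul p.1 e (by rw [hte]; exact hcond.1), he]
    · rfl

/-- Associativity of the smash product multiplication. -/
lemma smashMul_assoc {m₃ : (G × X) →₀ A} (h₃ : m₃ ∈ smashSet α 𝒜) (m₁ m₂ : (G × X) →₀ A) :
    smashMul α (smashMul α m₁ m₂) m₃ = smashMul α m₁ (smashMul α m₂ m₃) := by
  revert m₁ m₂
  refine smashSet_induction (P := fun f => ∀ m₁ m₂ : (G × X) →₀ A,
    smashMul α (smashMul α m₁ m₂) f = smashMul α m₁ (smashMul α m₂ f)) ?_ ?_ ?_ m₃ h₃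
  · intro m₁ m₂
    rw [smashMul_zero_right, smashMul_zero_right, smashMul_zero_right]
  · intro f g _ _ Pf Pg m₁ m₂
    rw [smashMul_add_right, smashMul_add_right, Pf, Pg, smashMul_add_right]
  · intro r c _ hr m₁ m₂
    induction m₁ using Finsupp.induction_linear with
    | zero => rw [smashMul_zero_left, smashMul_zero_left, smashMul_zero_left]
    | add u v hu hv => rw [smashMul_add_left, smashMul_add_left, hu, hv, smashMul_add_left]
    | single p a =>
        induction m₂ using Finsupp.induction_linear with
        | zero => rw [smashMul_zero_right, smashMul_zero_left, smashMul_zero_right]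
        | add u v hu hv =>
            rw [smashMul_add_right, smashMul_add_left, hu, hv, smashMul_add_left,
              smashMul_add_right]
        | single q b =>
            have hrcar : r.2 ∈ α.car (𝒢.inv r.1) := by rwa [α.car_inv]
            rw [smashMul_single_single (α := α) p q a b]
            by_cases hP : 𝒢.s p.1 = 𝒢.t q.1 ∧ α.act q.1 q.2 = p.2
            · rw [if_pos hP, smashMul_single_single, smashMul_single_single]
              by_cases hQ : 𝒢.s q.1 = 𝒢.t r.1 ∧ α.act r.1 r.2 = q.2
              · rw [if_pos ⟨by rw [𝒢.s_mul p.1 q.1 hP.1]; exact hQ.1, hQ.2⟩, if_pos hQ,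
                  smashMul_single_single]
                have hcond2 : 𝒢.s p.1 = 𝒢.t (𝒢.mul q.1 r.1) ∧
                    α.act (𝒢.mul q.1 r.1) r.2 = p.2 := by
                  constructor
                  · rw [𝒢.t_mul q.1 r.1 hQ.1]; exact hP.1
                  · rw [← α.act_mul q.1 r.1 hQ.1 r.2 hrcar, hQ.2, hP.2]
                rw [if_pos hcond2]
                have hpt : ((𝒢.mul (𝒢.mul p.1 q.1) r.1, r.2) : G × X)
                    = ((𝒢.mul p.1 (𝒢.mul q.1 r.1), r.2) : G × X) := by
                  rw [𝒢.mul_assoc p.1 q.1 r.1 hP.1 hQ.1]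
                rw [hpt, mul_assoc]
              · rw [if_neg hQ, smashMul_zero_right]
                refine if_neg (fun hh => hQ ⟨?_, hh.2⟩)
                rw [← 𝒢.s_mul p.1 q.1 hP.1]
                exact hh.1
            · rw [if_neg hP, smashMul_zero_left, smashMul_single_single]
              by_cases hQ : 𝒢.s q.1 = 𝒢.t r.1 ∧ α.act r.1 r.2 = q.2
              · rw [if_pos hQ, smashMul_single_single]
                refine (if_neg (fun hh => hP ⟨?_, ?_⟩)).symm
                · rw [hh.1, 𝒢.t_mul q.1 r.1 hQ.1]
                · rw [← hQ.2, α.act_mul q.1 r.1 hQ.1 r.2 hrcar, hh.2]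
              · rw [if_neg hQ, smashMul_zero_right]

lemma gammaAct_of_empty (κ : K') (h : β.car (𝒦.inv κ) = ∅) (f : (G × X) →₀ A) :
    gammaAct β κ f = 0 := by
  refine Finset.sum_eq_zero fun p _ => if_neg (fun hmem => ?_)
  rw [h] at hmem
  exact hmem

lemma gammaAct_mem (κ : K')
    (hdicho : β.car (𝒦.inv κ) = ∅ ∨ (β.car (𝒦.inv κ) = Set.univ ∧
      ∀ x g, x ∈ α.car g → β.act κ x ∈ α.car g))
    {f : (G × X) →₀ A} (hf : f ∈ smashSet α 𝒜) : gammaAct β κ f ∈ smashSet α 𝒜 := by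
  rcases hdicho with h | ⟨h1, h2⟩
  · rw [gammaAct_of_empty κ h]
    exact smashSet_zero
  · refine smashSet_finsupp_sum _ _ fun p hp => ?_
    rw [if_pos (h1 ▸ Set.mem_univ p.2)]
    refine smashSet_single (hf p).1 (fun hne => ?_)
    exact h2 p.2 _ ((hf p).2 hne)

lemma phiStar_zero : phiStar α β (0 : (G × OrbT β) →₀ A) = 0 :=
  Finsupp.sum_zero_index

lemma phiStar_mem [Finite X] {lam : GpdSetAction 𝒢 (OrbT β)} {w : (G × OrbT β) →₀ A}
    (hw : w ∈ smashSet lam 𝒜) : phiStar α β w ∈ smashSet α 𝒜 := by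
  rw [phiStar_eq]
  refine smashSet_finsupp_sum _ _ fun p hp => smashSet_finset_sum _ _ fun y hy => ?_
  exact smashSet_single (hw p).1 (fun _ => ((mem_colFinset p y).mp hy).1)

/-- Key lemma A: `γ_κ` commutes with right multiplication by `φ*(w)`. -/
lemma gamma_mul_phiStar [Finite X] (κ : K')
    (huniv : β.car (𝒦.inv κ) = Set.univ)
    (hpieces : ∀ x g, x ∈ α.car g → β.act κ x ∈ α.car g)
    (hequiv : ∀ g x, x ∈ α.car (𝒢.inv g) → β.act κ (α.act g x) = α.act g (β.act κ x))
    (horb : ∀ x : X, orbit β (β.act κ x) = orbit β x)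
    {f : (G × X) →₀ A} (hf : f ∈ smashSet α 𝒜) (w : (G × OrbT β) →₀ A) :
    gammaAct β κ (smashMul α f (phiStar α β w))
      = smashMul α (gammaAct β κ f) (phiStar α β w) := by
  revert w
  refine smashSet_induction (P := fun f => ∀ w : (G × OrbT β) →₀ A,
    gammaAct β κ (smashMul α f (phiStar α β w))
      = smashMul α (gammaAct β κ f) (phiStar α β w)) ?_ ?_ ?_ f hf
  · intro w
    rw [smashMul_zero_left, gammaAct_zero, smashMul_zero_left]
  · intro u v _ _ Pu Pv w
    rw [smashMul_add_left, gammaAct_add, Pu, Pv, gammaAct_add, smashMul_add_left]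
  · intro p a ha hx
    obtain ⟨pg, px⟩ := p
    have hx' : px ∈ α.car (𝒢.s pg) := hx
    have hmemU : ∀ u : X, u ∈ β.car (𝒦.inv κ) := fun u => by
      rw [huniv]; exact Set.mem_univ u
    intro w
    induction w using Finsupp.induction_linear with
    | zero => rw [phiStar_zero, smashMul_zero_right, gammaAct_zero, smashMul_zero_right]
    | add u v hu hv => rw [phiStar_add, smashMul_add_right, gammaAct_add, hu, hv,
        smashMul_add_right]
    | single pw b =>
        obtain ⟨wh, wo⟩ := pw
        rw [single_mul_phiStar hx' a wh wo b,
          gammaAct_single' κ pg px a, if_pos (hmemU px),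
          single_mul_phiStar (hpieces px _ hx') a wh wo b,
          apply_ite (gammaAct β κ), gammaAct_zero,
          gammaAct_single' κ (𝒢.mul pg wh) (α.act (𝒢.inv wh) px) (a * b),
          if_pos (hmemU _)]
        by_cases hc : 𝒢.s pg = 𝒢.t wh
        · have hmem : px ∈ α.car (𝒢.inv (𝒢.inv wh)) := by
            rw [α.car_inv_inv]
            exact hc ▸ hx'
          have heqv : β.act κ (α.act (𝒢.inv wh) px)
              = α.act (𝒢.inv wh) (β.act κ px) := hequiv (𝒢.inv wh) px hmem
          rw [← heqv, horb]
        · rw [if_neg (fun hh => hc hh.1), if_neg (fun hh => hc hh.1)]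

/-- Key lemma B: `γ_κ (m ⬝ γ_l f) = γ_κ m ⬝ γ_{κl} f`. -/
lemma gamma_mul_gamma (κ l : K')
    (hκuniv : β.car (𝒦.inv κ) = Set.univ) (hluniv : β.car (𝒦.inv l) = Set.univ)
    (hmuluniv : β.car (𝒦.inv (𝒦.mul κ l)) = Set.univ)
    (hpieces_l : ∀ x g, x ∈ α.car g → β.act l x ∈ α.car g)
    (hequiv : ∀ g x, x ∈ α.car (𝒢.inv g) → β.act κ (α.act g x) = α.act g (β.act κ x))
    (hinj : ∀ x y : X, β.act κ x = β.act κ y → x = y)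
    (hcomp : ∀ x : X, β.act (𝒦.mul κ l) x = β.act κ (β.act l x))
    {f : (G × X) →₀ A} (hf : f ∈ smashSet α 𝒜) (m : (G × X) →₀ A) :
    gammaAct β κ (smashMul α m (gammaAct β l f))
      = smashMul α (gammaAct β κ m) (gammaAct β (𝒦.mul κ l) f) := by
  revert m
  refine smashSet_induction (P := fun f => ∀ m : (G × X) →₀ A,
    gammaAct β κ (smashMul α m (gammaAct β l f))
      = smashMul α (gammaAct β κ m) (gammaAct β (𝒦.mul κ l) f)) ?_ ?_ ?_ f hf
  · intro m
    rw [gammaAct_zero, smashMul_zero_right, gammaAct_zero, gammaAct_zero, smashMul_zero_right]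
  · intro u v _ _ Pu Pv m
    rw [gammaAct_add, smashMul_add_right, gammaAct_add, Pu, Pv, gammaAct_add,
      smashMul_add_right]
  · intro r c _ hr m
    obtain ⟨rg, rx⟩ := r
    have hr' : rx ∈ α.car (𝒢.s rg) := hr
    have hmemK : ∀ u : X, u ∈ β.car (𝒦.inv κ) := fun u => by
      rw [hκuniv]; exact Set.mem_univ u
    have hmemL : ∀ u : X, u ∈ β.car (𝒦.inv l) := fun u => by
      rw [hluniv]; exact Set.mem_univ u
    have hmemM : ∀ u : X, u ∈ β.car (𝒦.inv (𝒦.mul κ l)) := fun u => by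
      rw [hmuluniv]; exact Set.mem_univ u
    have hucar : β.act l rx ∈ α.car (𝒢.inv rg) := by
      rw [α.car_inv]
      exact hpieces_l rx _ hr'
    induction m using Finsupp.induction_linear with
    | zero => rw [smashMul_zero_left, gammaAct_zero, smashMul_zero_left]
    | add u v hu hv => rw [smashMul_add_left, gammaAct_add, hu, hv, gammaAct_add,
        smashMul_add_left]
    | single p a =>
        obtain ⟨pg, px⟩ := p
        rw [gammaAct_single' l rg rx c, if_pos (hmemL rx),
          smashMul_single_single' pg rg px (β.act l rx) a c,
          apply_ite (gammaAct β κ), gammaAct_zero,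
          gammaAct_single' κ (𝒢.mul pg rg) (β.act l rx) (a * c), if_pos (hmemK _),
          gammaAct_single' κ pg px a, if_pos (hmemK px),
          gammaAct_single' (𝒦.mul κ l) rg rx c, if_pos (hmemM rx),
          smashMul_single_single' pg rg (β.act κ px) (β.act (𝒦.mul κ l) rx) a c,
          hcomp rx]
        by_cases hC : 𝒢.s pg = 𝒢.t rg ∧ α.act rg (β.act l rx) = px
        · rw [if_pos hC, if_pos ⟨hC.1,
            (hequiv rg (β.act l rx) hucar).symm.trans (congrArg (β.act κ) hC.2)⟩]
        · rw [if_neg hC, if_neg (fun hh => hC ⟨hh.1, hinj _ _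
            ((hequiv rg (β.act l rx) hucar).trans hh.2)⟩)]

end KeyLemmas


section PsiSection

variable {k : Type*} {A : Type w} [Field k] [Ring A] [Algebra k A]
variable {K' : Type*} {𝒢 : Gpd G} {𝒦 : Gpd K'}
variable {𝒜 : GpdGrading 𝒢 k A}

/-- The map realizing the skew groupoid ring inside the endomorphisms. -/
noncomputable def Psi (α : GpdSetAction 𝒢 X) (β : GpdSetAction 𝒦 X)
    (F : K' →₀ ((G × X) →₀ A)) (f : (G × X) →₀ A) : (G × X) →₀ A :=
  F.sum fun κ x => smashMul α x (gammaAct β κ f)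

variable {α : GpdSetAction 𝒢 X} {β : GpdSetAction 𝒦 X}

lemma Psi_zero (f : (G × X) →₀ A) : Psi α β 0 f = 0 :=
  Finsupp.sum_zero_index

lemma Psi_single (κ : K') (v : (G × X) →₀ A) (f : (G × X) →₀ A) :
    Psi α β (Finsupp.single κ v) f = smashMul α v (gammaAct β κ f) :=
  Finsupp.sum_single_index (smashMul_zero_left _)

lemma Psi_add (F₁ F₂ : K' →₀ ((G × X) →₀ A)) (f : (G × X) →₀ A) :
    Psi α β (F₁ + F₂) f = Psi α β F₁ f + Psi α β F₂ f :=
  Finsupp.sum_add_index' (fun κ => smashMul_zero_left _)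
    (fun κ x y => smashMul_add_left x y _)

lemma Psi_smul (c : k) (F : K' →₀ ((G × X) →₀ A)) (f : (G × X) →₀ A) :
    Psi α β (c • F) f = c • Psi α β F f := by
  unfold Psi
  rw [Finsupp.sum_smul_index' (fun κ => smashMul_zero_left (gammaAct β κ f)), Finsupp.smul_sum]
  exact Finsupp.sum_congr fun κ _ => smashMul_smul_left c _ _

lemma Psi_sum_F {ι : Type*} (s : Finset ι) (t : ι → (K' →₀ ((G × X) →₀ A)))
    (f : (G × X) →₀ A) :
    Psi α β (∑ i ∈ s, t i) f = ∑ i ∈ s, Psi α β (t i) f := by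
  classical
  induction s using Finset.induction_on with
  | empty => rw [Finset.sum_empty, Finset.sum_empty]; exact Psi_zero f
  | insert _ _ hns ih => rw [Finset.sum_insert hns, Finset.sum_insert hns, Psi_add, ih]

lemma Psi_f_zero (F : K' →₀ ((G × X) →₀ A)) : Psi α β F 0 = 0 :=
  Finset.sum_eq_zero fun κ _ => by
    show smashMul α (F κ) (gammaAct β κ (0 : (G × X) →₀ A)) = 0
    rw [gammaAct_zero, smashMul_zero_right]

lemma Psi_f_add (F : K' →₀ ((G × X) →₀ A)) (f₁ f₂ : (G × X) →₀ A) :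
    Psi α β F (f₁ + f₂) = Psi α β F f₁ + Psi α β F f₂ := by
  unfold Psi
  rw [← Finsupp.sum_add]
  exact Finsupp.sum_congr fun κ _ => by rw [gammaAct_add, smashMul_add_right]

lemma Psi_f_smul (c : k) (F : K' →₀ ((G × X) →₀ A)) (f : (G × X) →₀ A) :
    Psi α β F (c • f) = c • Psi α β F f := by
  unfold Psi
  rw [Finsupp.smul_sum]
  exact Finsupp.sum_congr fun κ _ => by rw [gammaAct_smul, smashMul_smul_right]

lemma Psi_finsupp_sum {ι : Type*} {M : Type*} [Zero M] (t : ι →₀ M)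
    (h : ι → M → (K' →₀ ((G × X) →₀ A))) (f : (G × X) →₀ A) :
    Psi α β (t.sum h) f = t.sum fun i c => Psi α β (h i c) f :=
  Psi_sum_F t.support (fun i => h i (t i)) f

end PsiSection

end Aux

set_option maxHeartbeats 2000000

/-- Let `X` be a finite split transitive `𝒢`-set (`𝒢₀`
finite) and `A` a unital `𝒢`-graded algebra, and let `I_𝒢(X)` be the groupoid
of partial bijections of `X` with `α`-invariant domain and image which are
morphisms of `𝒢`-sets, acting on `X` by `β_ρ = ρ` on `Y_ρ = im(ρ)`.
This action is fully faithful and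
`(A #_α^𝒢 X) *_γ I_𝒢(X) ≅ End((A #_α^𝒢 X)_{A #_λ^𝒢 O})` as algebras. -/
theorem duality_theorem_partial_bijections
    {G : Type u} (𝒢 : Gpd G) {X : Type v}
    (k : Type*) (A : Type w) [Field k] [Ring A] [Algebra k A] [Finite X]
    (hG₀ : 𝒢.Objs.Finite) (𝒜 : GpdGrading 𝒢 k A)
    (α : GpdSetAction 𝒢 X) (hsplit : α.Split)
    -- the action `α` is transitive
    (htrans : ∀ x y : X, ∃ g, x ∈ α.car (𝒢.inv g) ∧ α.act g x = y)
    -- `𝒦 = I_𝒢(X)` with its groupoid structure of partial bijections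
    (𝒦 : Gpd {ρ : Set (X × X) // IsIGElem α ρ})
    (hKs : ∀ ρ : {ρ : Set (X × X) // IsIGElem α ρ},
      (𝒦.s ρ : Set (X × X)) = {p | p.1 = p.2 ∧ p.1 ∈ Prod.fst '' (ρ : Set (X × X))})
    (hKt : ∀ ρ : {ρ : Set (X × X) // IsIGElem α ρ},
      (𝒦.t ρ : Set (X × X)) = {p | p.1 = p.2 ∧ p.1 ∈ Prod.snd '' (ρ : Set (X × X))})
    (hKinv : ∀ ρ : {ρ : Set (X × X) // IsIGElem α ρ},
      (𝒦.inv ρ : Set (X × X)) = Prod.swap '' (ρ : Set (X × X)))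
    (hKmul : ∀ ρ σ : {ρ : Set (X × X) // IsIGElem α ρ}, 𝒦.s ρ = 𝒦.t σ →
      (𝒦.mul ρ σ : Set (X × X)) =
        {p : X × X | ∃ y, (p.1, y) ∈ (σ : Set (X × X)) ∧ (y, p.2) ∈ (ρ : Set (X × X))})
    -- `β` is the tautological action of `I_𝒢(X)` on `X`: `β_ρ = ρ` on `im(ρ)`
    (β : GpdSetAction 𝒦 X)
    (hβ₁ : ∀ ρ : {ρ : Set (X × X) // IsIGElem α ρ},
      β.car ρ = Prod.snd '' (ρ : Set (X × X)))
    (hβ₂ : ∀ ρ : {ρ : Set (X × X) // IsIGElem α ρ},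
      ∀ p ∈ (ρ : Set (X × X)), β.act ρ p.1 = p.2)
    -- `λ` is the induced `𝒢`-action on the set `O` of `I_𝒢(X)`-orbits
    (lam : GpdSetAction 𝒢 (OrbT β))
    (hlam₁ : ∀ g, lam.car g = {o : OrbT β | ∃ x ∈ α.car g, orbit β x = (o : Set X)})
    (hlam₂ : ∀ g, ∀ x ∈ α.car (𝒢.inv g), lam.act g (orbMap β x) = orbMap β (α.act g x)) :
    -- the action of `I_𝒢(X)` on `X` is fully faithful
    β.FullyFaithful ∧
    -- the duality isomorphism
    SmashDuality k α β 𝒜 lam := by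
  by_cases hX : Nonempty X
  case neg =>
    -- X is empty: everything is trivial
    have hXe : IsEmpty X := not_nonempty_iff.mp hX
    have hGXe : IsEmpty (G × X) := ⟨fun p => hXe.false p.2⟩
    have hzero : ∀ f : (G × X) →₀ A, f = 0 := fun f => Finsupp.ext fun p => (hGXe.false p).elim
    constructor
    · intro ρ x _ _
      exact (hXe.false x).elim
    · refine ⟨Psi α β, ?_, ?_, ?_, ?_, ?_, ?_⟩
      · intro F _
        refine ⟨?_, ?_, ?_, ?_⟩
        · intro f _ p
          exact (hGXe.false p).elim
        · intro f₁ _ f₂ _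
          rw [hzero (Psi α β F (f₁ + f₂)), hzero (Psi α β F f₁), hzero (Psi α β F f₂), add_zero]
        · intro c f _
          rw [hzero (Psi α β F (c • f)), hzero (Psi α β F f), smul_zero]
        · intro f _ w _
          rw [hzero (Psi α β F (smashMul α f (phiStar α β w))),
            hzero (smashMul α (Psi α β F f) (phiStar α β w))]
      · intro F₁ _ F₂ _ f _
        rw [hzero (Psi α β (F₁ + F₂) f), hzero (Psi α β F₁ f), hzero (Psi α β F₂ f), add_zero]
      · intro c F _ f _
        rw [hzero (Psi α β (c • F) f), hzero (Psi α β F f), smul_zero]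
      · intro F₁ _ F₂ _ f _
        rw [hzero (Psi α β (skewMul α β F₁ F₂) f), hzero (Psi α β F₁ (Psi α β F₂ f))]
      · intro F₁ _ F₂ _ _
        refine Finsupp.ext fun κ => ?_
        rw [hzero (F₁ κ), hzero (F₂ κ)]
      · intro Fend _
        refine ⟨0, ?_, ?_⟩
        · intro κ
          exact ⟨fun p => (hGXe.false p).elim, fun p => (hGXe.false p).elim⟩
        · intro f _
          rw [hzero (Psi α β 0 f), hzero (Fend f)]
  case pos =>
    obtain ⟨x₀⟩ := hX
    -- ==================== collapsed structure of I_𝒢(X) ====================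
    have hinvset : ∀ Y : Set X, AlphaInvariant α Y → Y.Nonempty → Y = Set.univ := by
      rintro Y hY ⟨y, hy⟩
      refine Set.eq_univ_iff_forall.mpr fun z => ?_
      obtain ⟨g, hg1, hg2⟩ := htrans y z
      exact (hY g ⟨y, ⟨hy, hg1⟩, hg2⟩).1
    have hsnd_inv : ∀ κ : {ρ : Set (X × X) // IsIGElem α ρ},
        Prod.snd '' ((𝒦.inv κ : {ρ : Set (X × X) // IsIGElem α ρ}) : Set (X × X))
          = Prod.fst '' (κ : Set (X × X)) := by
      intro κ
      rw [hKinv κ, Set.image_image]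
      rfl
    have hcar_inv_fst : ∀ κ : {ρ : Set (X × X) // IsIGElem α ρ},
        β.car (𝒦.inv κ) = Prod.fst '' (κ : Set (X × X)) := fun κ => by
      rw [hβ₁, hsnd_inv κ]
    have hdicho : ∀ κ : {ρ : Set (X × X) // IsIGElem α ρ},
        (β.car κ = Set.univ ∧ β.car (𝒦.inv κ) = Set.univ) ∨ ((κ : Set (X × X)) = ∅) := by
      intro κ
      by_cases hne : (κ : Set (X × X)).Nonempty
      · left
        constructor
        · rw [hβ₁]
          exact hinvset _ κ.2.2.2.1 (hne.image _)
        · rw [hcar_inv_fst]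
          exact hinvset _ κ.2.2.1 (hne.image _)
      · right
        exact Set.not_nonempty_iff_eq_empty.mp hne
    have hcar_of_empty : ∀ κ : {ρ : Set (X × X) // IsIGElem α ρ}, (κ : Set (X × X)) = ∅ →
        β.car κ = ∅ ∧ β.car (𝒦.inv κ) = ∅ := by
      intro κ h
      constructor
      · rw [hβ₁, h, Set.image_empty]
      · rw [hcar_inv_fst, h, Set.image_empty]
    have hgoodinv : ∀ κ : {ρ : Set (X × X) // IsIGElem α ρ}, β.car κ = Set.univ →
        β.car (𝒦.inv κ) = Set.univ := by
      intro κ hκ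
      rcases hdicho κ with ⟨_, h⟩ | h
      · exact h
      · exfalso
        have h1 := (hcar_of_empty κ h).1
        have : x₀ ∈ (∅ : Set X) := by rw [← h1, hκ]; trivial
        exact this
    have hgoodinv' : ∀ κ : {ρ : Set (X × X) // IsIGElem α ρ}, β.car (𝒦.inv κ) = Set.univ →
        β.car κ = Set.univ := by
      intro κ hκ
      rcases hdicho κ with ⟨h, _⟩ | h
      · exact h
      · exfalso
        have h1 := (hcar_of_empty κ h).2
        have : x₀ ∈ (∅ : Set X) := by rw [← h1, hκ]; trivial
        exact this
    have hgraph : ∀ κ : {ρ : Set (X × X) // IsIGElem α ρ}, β.car (𝒦.inv κ) = Set.univ →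
        ∀ x : X, (x, β.act κ x) ∈ (κ : Set (X × X)) := by
      intro κ hκ x
      have hx : x ∈ Prod.fst '' (κ : Set (X × X)) := by
        rw [← hcar_inv_fst, hκ]; trivial
      obtain ⟨⟨u, v⟩, hp, hp1⟩ := hx
      have hu : u = x := hp1
      subst hu
      have h2 : β.act κ u = v := hβ₂ κ (u, v) hp
      rw [h2]
      exact hp
    have hfun : ∀ κ : {ρ : Set (X × X) // IsIGElem α ρ}, ∀ u v : X,
        (u, v) ∈ (κ : Set (X × X)) → β.act κ u = v := fun κ u v h => hβ₂ κ (u, v) h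
    have hpieces : ∀ κ : {ρ : Set (X × X) // IsIGElem α ρ}, β.car (𝒦.inv κ) = Set.univ →
        ∀ x g, x ∈ α.car g → β.act κ x ∈ α.car g := by
      intro κ hκ x g hx
      exact κ.2.2.2.2.1 (x, β.act κ x) (hgraph κ hκ x) g hx
    have hequiv : ∀ κ : {ρ : Set (X × X) // IsIGElem α ρ}, β.car (𝒦.inv κ) = Set.univ →
        ∀ g x, x ∈ α.car (𝒢.inv g) → β.act κ (α.act g x) = α.act g (β.act κ x) := by
      intro κ hκ g x hx
      exact hfun κ _ _ (κ.2.2.2.2.2 (x, β.act κ x) (hgraph κ hκ x) g hx)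
    have hinj : ∀ κ : {ρ : Set (X × X) // IsIGElem α ρ}, β.car (𝒦.inv κ) = Set.univ →
        ∀ x y : X, β.act κ x = β.act κ y → x = y := by
      intro κ hκ x y h
      exact κ.2.1.2 (x, β.act κ x) (hgraph κ hκ x) (y, β.act κ y) (hgraph κ hκ y) (by rw [h])
    -- ==================== the identity element ι ====================
    have hUnivInv : AlphaInvariant α Set.univ := by
      intro g
      rintro z ⟨u, ⟨_, hu⟩, rfl⟩
      exact ⟨trivial, (α.bijOn g).mapsTo hu⟩
    have hfstdiag : Prod.fst '' {p : X × X | p.1 = p.2} = Set.univ :=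
      Set.eq_univ_iff_forall.mpr fun u => ⟨(u, u), rfl, rfl⟩
    have hsnddiag : Prod.snd '' {p : X × X | p.1 = p.2} = Set.univ :=
      Set.eq_univ_iff_forall.mpr fun u => ⟨(u, u), rfl, rfl⟩
    have hdiagIG : IsIGElem α {p : X × X | p.1 = p.2} := by
      refine ⟨⟨?_, ?_⟩, ?_, ?_, ?_, ?_⟩
      · intro p hp q hq h
        show p.2 = q.2
        rw [← hp, h, hq]
      · intro p hp q hq h
        show p.1 = q.1
        rw [hp, h, ← hq]
      · rw [hfstdiag]; exact hUnivInv
      · rw [hsnddiag]; exact hUnivInv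
      · intro p hp g h1
        exact hp ▸ h1
      · intro p hp g h1
        exact congrArg (α.act g) hp
    set ι : {ρ : Set (X × X) // IsIGElem α ρ} := ⟨{p : X × X | p.1 = p.2}, hdiagIG⟩ with hι
    have hactι : ∀ x : X, β.act ι x = x := fun x => hfun ι x x rfl
    have hcarι : β.car ι = Set.univ := by rw [hβ₁]; exact hsnddiag
    have hcarinvι : β.car (𝒦.inv ι) = Set.univ := hgoodinv ι hcarι
    have hsκ : ∀ κ : {ρ : Set (X × X) // IsIGElem α ρ}, β.car (𝒦.inv κ) = Set.univ →
        𝒦.s κ = ι := by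
      intro κ hκ
      apply Subtype.ext
      rw [hKs]
      have hf : Prod.fst '' (κ : Set (X × X)) = Set.univ := by rw [← hcar_inv_fst, hκ]
      rw [hf]
      ext p
      simp only [Set.mem_setOf_eq, Set.mem_univ, and_true]
      exact Iff.rfl
    have htκ : ∀ κ : {ρ : Set (X × X) // IsIGElem α ρ}, β.car κ = Set.univ →
        𝒦.t κ = ι := by
      intro κ hκ
      apply Subtype.ext
      rw [hKt]
      have hf : Prod.snd '' (κ : Set (X × X)) = Set.univ := by rw [← hβ₁, hκ]
      rw [hf]
      ext p
      simp only [Set.mem_setOf_eq, Set.mem_univ, and_true]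
      exact Iff.rfl
    have hsurj : ∀ κ : {ρ : Set (X × X) // IsIGElem α ρ}, β.car κ = Set.univ →
        ∀ u : X, ∃ v, β.act κ v = u := by
      intro κ hκ u
      have hu : u ∈ β.car κ := by rw [hκ]; trivial
      obtain ⟨v, _, hvu⟩ := (β.bijOn κ).surjOn hu
      exact ⟨v, hvu⟩
    have hcompD : ∀ κ l : {ρ : Set (X × X) // IsIGElem α ρ},
        β.car κ = Set.univ → β.car l = Set.univ →
        𝒦.s κ = 𝒦.t l ∧ β.car (𝒦.mul κ l) = Set.univ ∧
          ∀ x : X, β.act (𝒦.mul κ l) x = β.act κ (β.act l x) := by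
      intro κ l hκ hl
      have hs : 𝒦.s κ = 𝒦.t l := by rw [hsκ κ (hgoodinv κ hκ), htκ l hl]
      have hmulset := hKmul κ l hs
      have hcarmul : β.car (𝒦.mul κ l) = Set.univ := by
        rw [hβ₁, hmulset]
        refine Set.eq_univ_iff_forall.mpr fun u => ?_
        obtain ⟨v, hv⟩ := hsurj κ hκ u
        obtain ⟨w, hw⟩ := hsurj l hl v
        refine ⟨(w, u), ⟨v, ?_, ?_⟩, rfl⟩
        · rw [← hw]; exact hgraph l (hgoodinv l hl) w
        · rw [← hv]; exact hgraph κ (hgoodinv κ hκ) v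
      refine ⟨hs, hcarmul, fun x => ?_⟩
      have hx : x ∈ β.car (𝒦.inv l) := by rw [hgoodinv l hl]; trivial
      exact (β.act_mul κ l hs x hx).symm
    have hact_inv_act : ∀ κ : {ρ : Set (X × X) // IsIGElem α ρ}, β.car κ = Set.univ →
        ∀ u : X, β.act (𝒦.inv κ) (β.act κ u) = u := by
      intro κ hκ u
      have hu : u ∈ β.car (𝒦.inv κ) := by rw [hgoodinv κ hκ]; trivial
      have h1 := β.act_mul (𝒦.inv κ) κ (𝒦.s_inv κ) u hu
      rw [𝒦.inv_mul, hsκ κ (hgoodinv κ hκ)] at h1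
      rw [h1, hactι]
    have hact_act_inv : ∀ κ : {ρ : Set (X × X) // IsIGElem α ρ}, β.car κ = Set.univ →
        ∀ z : X, β.act κ (β.act (𝒦.inv κ) z) = z := by
      intro κ hκ z
      have hz : z ∈ β.car (𝒦.inv (𝒦.inv κ)) := by
        rw [hgoodinv (𝒦.inv κ) (hgoodinv κ hκ)]; trivial
      have h1 := β.act_mul κ (𝒦.inv κ) (𝒦.t_inv κ).symm z hz
      rw [𝒦.mul_inv, htκ κ hκ] at h1
      rw [h1, hactι]
    have hfix : ∀ κ : {ρ : Set (X × X) // IsIGElem α ρ}, β.car (𝒦.inv κ) = Set.univ →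
        ∀ x : X, β.act κ x = x → κ = ι := by
      intro κ hκ x hfixx
      apply Subtype.ext
      have hxx : (x, x) ∈ (κ : Set (X × X)) := by
        have h := hgraph κ hκ x
        rwa [hfixx] at h
      have hsub : ∀ z : X, (z, z) ∈ (κ : Set (X × X)) := by
        intro z
        obtain ⟨g, hg1, hg2⟩ := htrans x z
        have h5 := κ.2.2.2.2.2 (x, x) hxx g hg1
        rw [hg2] at h5
        exact h5
      ext p
      constructor
      · intro hp
        show p.1 = p.2
        exact (hfun κ p.1 p.1 (hsub p.1)).symm.trans (hβ₂ κ p hp)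
      · intro hp
        have hpp : (p.1, p.2) ∈ (κ : Set (X × X)) := by
          have h1 := hsub p.1
          have hp' : p.1 = p.2 := hp
          rw [← hp']
          exact h1
        rwa [Prod.mk.eta] at hpp
    have hICancel : ∀ κ l : {ρ : Set (X × X) // IsIGElem α ρ},
        β.car κ = Set.univ → β.car l = Set.univ →
        ∀ x : X, β.act κ x = β.act l x → κ = l := by
      intro κ l hκ hl x h
      have hlinv : β.car (𝒦.inv l) = Set.univ := hgoodinv l hl
      obtain ⟨hc1, hc2, hc3⟩ := hcompD (𝒦.inv l) κ hlinv hκ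
      have hτfix : β.act (𝒦.mul (𝒦.inv l) κ) x = x := by
        rw [hc3 x, h, hact_inv_act l hl x]
      have hτι : 𝒦.mul (𝒦.inv l) κ = ι := hfix _ (hgoodinv _ hc2) x hτfix
      have h1 : 𝒦.mul (𝒦.mul l (𝒦.inv l)) κ = 𝒦.mul l (𝒦.mul (𝒦.inv l) κ) :=
        𝒦.mul_assoc l (𝒦.inv l) κ (𝒦.t_inv l).symm hc1
      rw [𝒦.mul_inv, hτι] at h1
      have h2 : 𝒦.mul (𝒦.t l) κ = κ := by
        rw [htκ l hl, ← htκ κ hκ]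
        exact 𝒦.tgt_mul κ
      have h3 : 𝒦.mul l ι = l := by
        rw [← hsκ l hlinv]
        exact 𝒦.mul_src l
      rw [h2, h3] at h1
      exact h1
    have horbmem : ∀ x y : X, y ∈ orbit β x ↔
        ∃ κ : {ρ : Set (X × X) // IsIGElem α ρ}, β.car κ = Set.univ ∧ β.act κ x = y := by
      intro x y
      constructor
      · rintro ⟨κ, hx, hy⟩
        rcases hdicho κ with ⟨h1, _⟩ | h
        · exact ⟨κ, h1, hy⟩
        · exfalso
          rw [(hcar_of_empty κ h).2] at hx
          exact hx
      · rintro ⟨κ, hκ, hy⟩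
        exact ⟨κ, by rw [hgoodinv κ hκ]; trivial, hy⟩
    have horb_refl : ∀ x : X, x ∈ orbit β x :=
      fun x => (horbmem x x).mpr ⟨ι, hcarι, hactι x⟩
    have horb_act : ∀ κ : {ρ : Set (X × X) // IsIGElem α ρ}, β.car κ = Set.univ →
        ∀ x : X, orbit β (β.act κ x) = orbit β x := by
      intro κ hκ x
      ext y
      rw [horbmem, horbmem]
      constructor
      · rintro ⟨κ', hκ', hy⟩
        obtain ⟨d1, d2, d3⟩ := hcompD κ' κ hκ' hκ
        exact ⟨𝒦.mul κ' κ, d2, by rw [d3, hy]⟩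
      · rintro ⟨κ', hκ', hy⟩
        have hκinv : β.car (𝒦.inv κ) = Set.univ := hgoodinv κ hκ
        obtain ⟨d1, d2, d3⟩ := hcompD κ' (𝒦.inv κ) hκ' hκinv
        refine ⟨𝒦.mul κ' (𝒦.inv κ), d2, ?_⟩
        rw [d3, hact_inv_act κ hκ x, hy]
    have hEzero : ∀ κ : {ρ : Set (X × X) // IsIGElem α ρ}, ∀ m : (G × X) →₀ A,
        m ∈ Eset α β 𝒜 κ → β.car κ = ∅ → m = 0 := by
      intro κ m hm hc
      refine Finsupp.ext fun p => ?_
      by_contra h0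
      have := hm.2 p h0
      rw [hc] at this
      exact this
    have hγmem : ∀ κ : {ρ : Set (X × X) // IsIGElem α ρ}, ∀ f : (G × X) →₀ A,
        f ∈ smashSet α 𝒜 → gammaAct β κ f ∈ smashSet α 𝒜 := by
      intro κ f hf
      refine gammaAct_mem κ ?_ hf
      rcases hdicho κ with ⟨h1, h2⟩ | h
      · exact Or.inr ⟨h2, hpieces κ h2⟩
      · exact Or.inl (hcar_of_empty κ h).2
    -- ==================== conclusion ====================
    constructor
    · -- full faithfulness
      intro ρ x hx hfixρ
      rcases hdicho ρ with ⟨h1, h2⟩ | h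
      · have hρι := hfix ρ h2 x hfixρ
        show 𝒦.s ρ = ρ
        rw [hρι]
        exact hsκ ι hcarinvι
      · exfalso
        have hx1 := hx.1
        rw [(hcar_of_empty ρ h).1] at hx1
        exact hx1
    · -- the duality isomorphism
      refine ⟨Psi α β, ?_, ?_, ?_, ?_, ?_, ?_⟩
      · -- (1) Ψ maps into the endomorphism algebra
        intro F hF
        refine ⟨?_, ?_, ?_, ?_⟩
        · intro f hf
          exact smashSet_finsupp_sum _ _ fun κ _ => smashSet_mul (hF κ).1 (hγmem κ f hf)
        · intro f₁ _ f₂ _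
          exact Psi_f_add F f₁ f₂
        · intro c f _
          exact Psi_f_smul c F f
        · intro f hf w hw
          have hstep : ∀ κ ∈ F.support,
              smashMul α (F κ) (gammaAct β κ (smashMul α f (phiStar α β w)))
                = smashMul α (smashMul α (F κ) (gammaAct β κ f)) (phiStar α β w) := by
            intro κ _
            rcases hdicho κ with ⟨h1, h2⟩ | h
            · rw [gamma_mul_phiStar κ h2 (hpieces κ h2) (hequiv κ h2)
                (fun x => horb_act κ h1 x) hf w]
              exact (smashMul_assoc (phiStar_mem hw) (F κ) (gammaAct β κ f)).symm
            · have hγ0 : ∀ u : (G × X) →₀ A, gammaAct β κ u = 0 :=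
                fun u => gammaAct_of_empty κ (hcar_of_empty κ h).2 u
              rw [hγ0, hγ0, smashMul_zero_right, smashMul_zero_left]
          calc Psi α β F (smashMul α f (phiStar α β w))
              = F.sum fun κ x =>
                  smashMul α (smashMul α x (gammaAct β κ f)) (phiStar α β w) :=
                Finsupp.sum_congr hstep
            _ = smashMul α (Psi α β F f) (phiStar α β w) :=
                (smashMul_sum_left F.support
                  (fun κ => smashMul α (F κ) (gammaAct β κ f)) (phiStar α β w)).symm
      · -- (2) additivity
        intro F₁ _ F₂ _ f _
        exact Psi_add F₁ F₂ f
      · -- (3) homogeneity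
        intro c F _ f _
        exact Psi_smul c F f
      · -- (4) multiplicativity
        intro F₁ hF₁ F₂ hF₂ f hf
        have hterm : ∀ κ l : {ρ : Set (X × X) // IsIGElem α ρ},
            Psi α β (@ite _ (𝒦.s κ = 𝒦.t l) (Classical.propDecidable _)
                (Finsupp.single (𝒦.mul κ l)
                  (smashMul α (F₁ κ) (gammaAct β κ (F₂ l)))) 0) f
              = smashMul α (F₁ κ) (gammaAct β κ (smashMul α (F₂ l) (gammaAct β l f))) := by
          intro κ l
          rcases hdicho κ with ⟨hκ1, hκ2⟩ | hκe
          · rcases hdicho l with ⟨hl1, hl2⟩ | hle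
            · have hsl : 𝒦.s κ = 𝒦.t l := by rw [hsκ κ hκ2, htκ l hl1]
              rw [if_pos hsl, Psi_single]
              obtain ⟨d1, d2, d3⟩ := hcompD κ l hκ1 hl1
              rw [gamma_mul_gamma κ l hκ2 hl2 (hgoodinv _ d2) (hpieces l hl2)
                (hequiv κ hκ2) (hinj κ hκ2) d3 hf (F₂ l)]
              exact smashMul_assoc (hγmem (𝒦.mul κ l) f hf) (F₁ κ) (gammaAct β κ (F₂ l))
            · rw [hEzero l (F₂ l) (hF₂ l) (hcar_of_empty l hle).1]
              rw [gammaAct_zero, smashMul_zero_right, Finsupp.single_zero, ite_self,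
                Psi_zero, smashMul_zero_left, gammaAct_zero, smashMul_zero_right]
          · rw [hEzero κ (F₁ κ) (hF₁ κ) (hcar_of_empty κ hκe).1]
            rw [smashMul_zero_left, Finsupp.single_zero, ite_self, Psi_zero,
              smashMul_zero_left]
        have h1 : Psi α β (skewMul α β F₁ F₂) f
            = F₁.sum fun κ x => F₂.sum fun l y =>
                Psi α β (@ite _ (𝒦.s κ = 𝒦.t l) (Classical.propDecidable _)
                  (Finsupp.single (𝒦.mul κ l) (smashMul α x (gammaAct β κ y))) 0) f := by
          have hskew : skewMul α β F₁ F₂ = F₁.sum fun κ x => F₂.sum fun l y =>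
              @ite _ (𝒦.s κ = 𝒦.t l) (Classical.propDecidable _)
                (Finsupp.single (𝒦.mul κ l) (smashMul α x (gammaAct β κ y))) 0 := rfl
          rw [hskew, Psi_finsupp_sum F₁ (fun κ x => F₂.sum fun l y =>
              @ite _ (𝒦.s κ = 𝒦.t l) (Classical.propDecidable _)
                (Finsupp.single (𝒦.mul κ l) (smashMul α x (gammaAct β κ y))) 0) f]
          exact Finsupp.sum_congr fun κ _ => Psi_finsupp_sum F₂ _ f
        have h2 : Psi α β F₁ (Psi α β F₂ f)
            = F₁.sum fun κ x => F₂.sum fun l y =>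
                smashMul α x (gammaAct β κ (smashMul α y (gammaAct β l f))) := by
          refine Finsupp.sum_congr fun κ _ => ?_
          show smashMul α (F₁ κ) (gammaAct β κ (Psi α β F₂ f))
            = F₂.sum fun l y => smashMul α (F₁ κ) (gammaAct β κ (smashMul α y (gammaAct β l f)))
          rw [show Psi α β F₂ f
              = ∑ l ∈ F₂.support, smashMul α (F₂ l) (gammaAct β l f) from rfl,
            gammaAct_sum, smashMul_sum_right]
          rfl
        rw [h1, h2]
        exact Finsupp.sum_congr fun κ _ => Finsupp.sum_congr fun l _ => hterm κ l
      · -- (5) injectivity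
        intro F₁ hF₁ F₂ hF₂ hagree
        refine Finsupp.ext fun κ => ?_
        rcases hdicho κ with ⟨hκ1, hκ2⟩ | hκe
        · refine Finsupp.ext fun p => ?_
          obtain ⟨g, z⟩ := p
          by_cases hz : z ∈ α.car (𝒢.s g)
          · have hymem : β.act (𝒦.inv κ) z ∈ α.car (𝒢.s g) :=
              hpieces (𝒦.inv κ) (hgoodinv (𝒦.inv κ) hκ2) z (𝒢.s g) hz
            have hfmem : Finsupp.single ((𝒢.s g, β.act (𝒦.inv κ) z) : G × X)
                (𝒜.proj (𝒢.s g) 1) ∈ smashSet α 𝒜 := by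
              refine smashSet_single (𝒜.proj_mem _ 1) (fun _ => ?_)
              show β.act (𝒦.inv κ) z ∈ α.car (𝒢.s (𝒢.s g))
              rw [𝒢.s_s g]
              exact hymem
            have hcoef : ∀ F : {ρ : Set (X × X) // IsIGElem α ρ} →₀ ((G × X) →₀ A),
                (∀ κ', F κ' ∈ Eset α β 𝒜 κ') →
                (Psi α β F (Finsupp.single ((𝒢.s g, β.act (𝒦.inv κ) z) : G × X)
                  (𝒜.proj (𝒢.s g) 1))) (g, z) = F κ (g, z) := by
              intro F hFs
              have hκy : β.act κ (β.act (𝒦.inv κ) z) = z := hact_act_inv κ hκ1 z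
              have hterm1 : (smashMul α (F κ) (gammaAct β κ
                  (Finsupp.single ((𝒢.s g, β.act (𝒦.inv κ) z) : G × X)
                    (𝒜.proj (𝒢.s g) 1)))) (g, z) = F κ (g, z) := by
                rw [gammaAct_single' κ (𝒢.s g) (β.act (𝒦.inv κ) z) _,
                  if_pos (by rw [hκ2]; trivial)]
                rw [smashMul_single_obj_apply (𝒢.obj_s g)
                  (hpieces κ hκ2 (β.act (𝒦.inv κ) z) (𝒢.s g) hymem)]
                rw [if_pos ⟨rfl, hκy.symm⟩]
                exact 𝒜.mul_proj_one ((hFs κ).1 (g, z)).1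
              have hterm2 : ∀ κ' ∈ F.support, κ' ≠ κ →
                  (smashMul α (F κ') (gammaAct β κ'
                    (Finsupp.single ((𝒢.s g, β.act (𝒦.inv κ) z) : G × X)
                      (𝒜.proj (𝒢.s g) 1)))) (g, z) = 0 := by
                intro κ' _ hne
                rcases hdicho κ' with ⟨h1', h2'⟩ | he'
                · rw [gammaAct_single' κ' (𝒢.s g) (β.act (𝒦.inv κ) z) _,
                    if_pos (by rw [h2']; trivial)]
                  rw [smashMul_single_obj_apply (𝒢.obj_s g)
                    (hpieces κ' h2' (β.act (𝒦.inv κ) z) (𝒢.s g) hymem)]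
                  refine if_neg (fun hcond => hne ?_)
                  exact hICancel κ' κ h1' hκ1 (β.act (𝒦.inv κ) z)
                    (by rw [← hcond.2, hκy])
                · rw [hEzero κ' (F κ') (hFs κ') (hcar_of_empty κ' he').1,
                    smashMul_zero_left]
                  rfl
              calc (Psi α β F (Finsupp.single ((𝒢.s g, β.act (𝒦.inv κ) z) : G × X)
                    (𝒜.proj (𝒢.s g) 1))) (g, z)
                  = ∑ κ' ∈ F.support, (smashMul α (F κ') (gammaAct β κ'
                      (Finsupp.single ((𝒢.s g, β.act (𝒦.inv κ) z) : G × X)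
                        (𝒜.proj (𝒢.s g) 1)))) (g, z) := by
                    rw [show Psi α β F (Finsupp.single ((𝒢.s g, β.act (𝒦.inv κ) z) : G × X)
                        (𝒜.proj (𝒢.s g) 1))
                      = F.sum fun κ' v => smashMul α v (gammaAct β κ'
                          (Finsupp.single ((𝒢.s g, β.act (𝒦.inv κ) z) : G × X)
                            (𝒜.proj (𝒢.s g) 1))) from rfl, Finsupp.sum_apply]
                    rfl
                _ = (smashMul α (F κ) (gammaAct β κ
                      (Finsupp.single ((𝒢.s g, β.act (𝒦.inv κ) z) : G × X)
                        (𝒜.proj (𝒢.s g) 1)))) (g, z) := by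
                    refine Finset.sum_eq_single κ hterm2 (fun hnot => ?_)
                    rw [Finsupp.notMem_support_iff.mp hnot, smashMul_zero_left]
                    rfl
                _ = F κ (g, z) := hterm1
            rw [← hcoef F₁ hF₁, ← hcoef F₂ hF₂, hagree _ hfmem]
          · have h1 : F₁ κ (g, z) = 0 := by
              by_contra h0
              exact hz (((hF₁ κ).1 (g, z)).2 h0)
            have h2 : F₂ κ (g, z) = 0 := by
              by_contra h0
              exact hz (((hF₂ κ).1 (g, z)).2 h0)
            rw [h1, h2]
        · rw [hEzero κ (F₁ κ) (hF₁ κ) (hcar_of_empty κ hκe).1,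
            hEzero κ (F₂ κ) (hF₂ κ) (hcar_of_empty κ hκe).1]
      · -- (6) surjectivity
        intro Fend hEnd
        obtain ⟨hmem, hadd2, hsmul2, hmod⟩ := hEnd
        have hFzero : Fend 0 = 0 := by
          have h0 := hadd2 0 smashSet_zero 0 smashSet_zero
          rw [add_zero] at h0
          have h0' : Fend 0 + 0 = Fend 0 + Fend 0 := by rw [add_zero]; exact h0
          exact (add_left_cancel h0').symm
        choose eOf heOf using hsplit
        letI : Fintype X := Fintype.ofFinite X
        letI : Fintype {ρ : Set (X × X) // IsIGElem α ρ} := Fintype.ofFinite _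
        obtain ⟨Fs, hFsκ⟩ : ∃ Fs : {ρ : Set (X × X) // IsIGElem α ρ} →₀ ((G × X) →₀ A),
            ∀ κ, Fs κ = if β.car κ = Set.univ then
              ∑ x : X, colProj (β.act κ x)
                (Fend (Finsupp.single ((eOf x, x) : G × X) (𝒜.proj (eOf x) 1)))
              else 0 :=
          ⟨Finsupp.equivFunOnFinite.symm _, fun κ => rfl⟩
        have hunitmem : ∀ x : X,
            Finsupp.single ((eOf x, x) : G × X) (𝒜.proj (eOf x) 1) ∈ smashSet α 𝒜 := by
          intro x
          refine smashSet_single (𝒜.proj_mem _ 1) (fun _ => ?_)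
          show x ∈ α.car (𝒢.s (eOf x))
          rw [show 𝒢.s (eOf x) = eOf x from (heOf x).1.1]
          exact (heOf x).1.2
        refine ⟨Fs, ?_, ?_⟩
        · -- Fs ∈ skewSet
          intro κ
          constructor
          · rw [hFsκ κ]
            split_ifs with hκu
            · exact smashSet_finset_sum _ _ fun x _ =>
                colProj_mem (hmem _ (hunitmem x)) _
            · exact smashSet_zero
          · intro p hp
            by_cases hκu : β.car κ = Set.univ
            · rw [hκu]; trivial
            · exfalso
              rw [hFsκ κ, if_neg hκu] at hp
              exact hp rfl
        · -- the identity Ψ Fs = Fend on the smash product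
          intro f hf
          refine smashSet_induction (P := fun f => Psi α β Fs f = Fend f) ?_ ?_ ?_ f hf
          · show Psi α β Fs 0 = Fend 0
            rw [hFzero, Psi_f_zero]
          · intro u v hu hv Pu Pv
            show Psi α β Fs (u + v) = Fend (u + v)
            rw [Psi_f_add, Pu, Pv, hadd2 u hu v hv]
          · intro p a ha hx
            show Psi α β Fs (Finsupp.single p a) = Fend (Finsupp.single p a)
            obtain ⟨g, x⟩ := p
            have hx' : x ∈ α.car (𝒢.s g) := hx
            have hxinv : x ∈ α.car (𝒢.inv g) := by rwa [α.car_inv]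
            have hx'mem : α.act g x ∈ α.car (𝒢.t g) := α.mapsTo g hx'
            have heOfx' : eOf (α.act g x) = 𝒢.t g :=
              ((heOf (α.act g x)).2 (𝒢.t g) ⟨𝒢.obj_t g, hx'mem⟩).symm
            have hwmem : Finsupp.single ((g, orbMap β x) : G × OrbT β) a ∈ smashSet lam 𝒜 := by
              refine smashSet_single (p := ((g, orbMap β x) : G × OrbT β)) ha (fun _ => ?_)
              show orbMap β x ∈ lam.car (𝒢.s g)
              rw [hlam₁]
              exact ⟨x, hx', rfl⟩
            have hstepA : Finsupp.single ((g, x) : G × X) a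
                = smashMul α (Finsupp.single ((eOf (α.act g x), α.act g x) : G × X)
                    (𝒜.proj (eOf (α.act g x)) 1))
                  (phiStar α β (Finsupp.single ((g, orbMap β x) : G × OrbT β) a)) := by
              have hse : 𝒢.s (eOf (α.act g x)) = 𝒢.t g := by
                rw [show 𝒢.s (eOf (α.act g x)) = eOf (α.act g x) from
                  (heOf (α.act g x)).1.1, heOfx']
              have hxmem2 : α.act g x ∈ α.car (𝒢.s (eOf (α.act g x))) := by
                rw [hse]; exact hx'mem
              rw [single_mul_phiStar hxmem2 (𝒜.proj (eOf (α.act g x)) 1) g (orbMap β x) a]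
              have hinvact : α.act (𝒢.inv g) (α.act g x) = x := α.act_inv_act g hx'
              rw [if_pos ⟨hse, by rw [hinvact]; rfl⟩]
              rw [hinvact, show 𝒢.mul (eOf (α.act g x)) g = g from by
                rw [heOfx']; exact 𝒢.tgt_mul g]
              rw [heOfx', 𝒜.proj_one_mul ha]
            have hRHS : Fend (Finsupp.single ((g, x) : G × X) a)
                = ∑ y ∈ colFinset α β ((g, orbMap β x) : G × OrbT β),
                    smashMul α (Fend (Finsupp.single ((eOf (α.act g x), α.act g x) : G × X)
                      (𝒜.proj (eOf (α.act g x)) 1))) (Finsupp.single ((g, y) : G × X) a) := by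
              rw [hstepA, hmod _ (hunitmem (α.act g x)) _ hwmem, phiStar_single,
                smashMul_sum_right]
            have hLHS : Psi α β Fs (Finsupp.single ((g, x) : G × X) a)
                = ∑ κ ∈ Finset.univ.filter
                    (fun κ : {ρ : Set (X × X) // IsIGElem α ρ} => β.car κ = Set.univ),
                    smashMul α (Fend (Finsupp.single ((eOf (α.act g x), α.act g x) : G × X)
                      (𝒜.proj (eOf (α.act g x)) 1)))
                      (Finsupp.single ((g, β.act κ x) : G × X) a) := by
              have hterm3 : ∀ κ : {ρ : Set (X × X) // IsIGElem α ρ},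
                  smashMul α (Fs κ) (gammaAct β κ (Finsupp.single ((g, x) : G × X) a))
                    = if β.car κ = Set.univ then
                        smashMul α (Fend (Finsupp.single ((eOf (α.act g x), α.act g x) : G × X)
                          (𝒜.proj (eOf (α.act g x)) 1)))
                          (Finsupp.single ((g, β.act κ x) : G × X) a)
                      else 0 := by
                intro κ
                by_cases hκu : β.car κ = Set.univ
                · have hκinv : β.car (𝒦.inv κ) = Set.univ := hgoodinv κ hκu
                  rw [if_pos hκu, hFsκ κ, if_pos hκu,
                    gammaAct_single' κ g x a, if_pos (by rw [hκinv]; trivial),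
                    smashMul_sum_left]
                  have hax : α.act g (β.act κ x) = β.act κ (α.act g x) :=
                    (hequiv κ hκinv g x hxinv).symm
                  have hmain : ∀ x'' : X,
                      smashMul α (colProj (β.act κ x'')
                        (Fend (Finsupp.single ((eOf x'', x'') : G × X) (𝒜.proj (eOf x'') 1))))
                        (Finsupp.single ((g, β.act κ x) : G × X) a)
                      = if β.act κ x'' = β.act κ (α.act g x) then
                          smashMul α (Fend (Finsupp.single ((eOf x'', x'') : G × X)
                            (𝒜.proj (eOf x'') 1)))
                            (Finsupp.single ((g, β.act κ x) : G × X) a)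
                        else 0 := by
                    intro x''
                    rw [smashMul_colProj_single]
                    by_cases hcnd : β.act κ x'' = β.act κ (α.act g x)
                    · rw [if_pos hcnd, if_pos (by
                        show α.act g (β.act κ x) = β.act κ x''
                        rw [hax, hcnd])]
                    · rw [if_neg hcnd, if_neg (by
                        intro hcnd2
                        have : α.act g (β.act κ x) = β.act κ x'' := hcnd2
                        rw [hax] at this
                        exact hcnd this.symm)]
                  calc (∑ x'' : X, smashMul α (colProj (β.act κ x'')
                        (Fend (Finsupp.single ((eOf x'', x'') : G × X) (𝒜.proj (eOf x'') 1))))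
                        (Finsupp.single ((g, β.act κ x) : G × X) a))
                      = ∑ x'' : X, if β.act κ x'' = β.act κ (α.act g x) then
                          smashMul α (Fend (Finsupp.single ((eOf x'', x'') : G × X)
                            (𝒜.proj (eOf x'') 1)))
                            (Finsupp.single ((g, β.act κ x) : G × X) a)
                        else 0 := Finset.sum_congr rfl fun x'' _ => hmain x''
                    _ = smashMul α (Fend (Finsupp.single
                          ((eOf (α.act g x), α.act g x) : G × X)
                          (𝒜.proj (eOf (α.act g x)) 1)))
                          (Finsupp.single ((g, β.act κ x) : G × X) a) := by
                        have hsum := Finset.sum_eq_single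
                          (f := fun x'' : X => if β.act κ x'' = β.act κ (α.act g x) then
                            smashMul α (Fend (Finsupp.single ((eOf x'', x'') : G × X)
                              (𝒜.proj (eOf x'') 1)))
                              (Finsupp.single ((g, β.act κ x) : G × X) a) else 0)
                          (α.act g x)
                          (fun x'' _ hne => if_neg (fun hcnd => hne (hinj κ hκinv _ _ hcnd)))
                          (fun habs => absurd (Finset.mem_univ _) habs)
                        rw [hsum]
                        exact if_pos rfl
                · rw [if_neg hκu, hFsκ κ, if_neg hκu, smashMul_zero_left]
              calc Psi α β Fs (Finsupp.single ((g, x) : G × X) a)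
                  = ∑ κ : {ρ : Set (X × X) // IsIGElem α ρ},
                      smashMul α (Fs κ) (gammaAct β κ (Finsupp.single ((g, x) : G × X) a)) :=
                    Finsupp.sum_fintype _ _ (fun κ => smashMul_zero_left _)
                _ = ∑ κ : {ρ : Set (X × X) // IsIGElem α ρ},
                      if β.car κ = Set.univ then
                        smashMul α (Fend (Finsupp.single ((eOf (α.act g x), α.act g x) : G × X)
                          (𝒜.proj (eOf (α.act g x)) 1)))
                          (Finsupp.single ((g, β.act κ x) : G × X) a)
                      else 0 := Finset.sum_congr rfl fun κ _ => hterm3 κ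
                _ = ∑ κ ∈ Finset.univ.filter
                      (fun κ : {ρ : Set (X × X) // IsIGElem α ρ} => β.car κ = Set.univ),
                      smashMul α (Fend (Finsupp.single ((eOf (α.act g x), α.act g x) : G × X)
                        (𝒜.proj (eOf (α.act g x)) 1)))
                        (Finsupp.single ((g, β.act κ x) : G × X) a) :=
                    (Finset.sum_filter _ _).symm
            rw [hLHS, hRHS]
            refine Finset.sum_bij (fun κ _ => β.act κ x) ?_ ?_ ?_ ?_
            · intro κ hκ
              have hκu : β.car κ = Set.univ := (Finset.mem_filter.mp hκ).2
              refine (mem_colFinset _ _).mpr ⟨?_, ?_⟩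
              · exact hpieces κ (hgoodinv κ hκu) x (𝒢.s g) hx'
              · exact horb_act κ hκu x
            · intro κ₁ h₁ κ₂ h₂ heq
              exact hICancel κ₁ κ₂ (Finset.mem_filter.mp h₁).2 (Finset.mem_filter.mp h₂).2 x heq
            · intro y hy
              have hy2 := (mem_colFinset _ _).mp hy
              have hyx : y ∈ orbit β x := by
                have h0 := horb_refl y
                rwa [hy2.2] at h0
              obtain ⟨κ, hκu, hκy⟩ := (horbmem x y).mp hyx
              exact ⟨κ, Finset.mem_filter.mpr ⟨Finset.mem_univ _, hκu⟩, hκy⟩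
            · intro κ hκ
              rfl


end
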